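/- arXiv:1609.08744 — 9 statements merged into one kernel-verified Lean document; each statement's English description precedes it below -/
import Mathlib

section
/- Let N ∈ ℕ, h = 1/(N+1), and let f : {0,1,…,N+1} → ℂ be a grid function with f(0) = f(N+1) = 0. Then the discrete Gagliardo–Nirenberg inequality holds: ‖f‖_{l∞_h}² ≤ 2 ‖f‖_h ‖δ₊f‖_h, i.e. max_{0 ≤ l ≤ N+1} |f(l)|² ≤ 2 (∑_{l=0}^{N+1} |f(l)|² h)^{1/2} (∑_{l=0}^{N} |δ₊f(l)|² h)^{1/2}. -/
/-- Discrete Gagliardo–Nirenberg inequality: for a grid function `f` on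
`{0,1,…,N+1}` with homogeneous Dirichlet boundary conditions (`f 0 = 0`,
`f (N+1) = 0`), with step size `h = 1/(N+1)`, one has
`‖f‖_{l∞_h}² ≤ 2 ‖f‖_h ‖δ₊f‖_h`. -/
theorem discrete_gagliardo_nirenberg (N : ℕ) (h : ℝ) (hh : h = 1 / (N + 1))
    (f : ℕ → ℂ) (hf0 : f 0 = 0) (hfN : f (N + 1) = 0) :
    ∀ l ≤ N + 1, ‖f l‖ ^ 2 ≤
      2 * Real.sqrt (∑ l ∈ Finset.range (N + 2), ‖f l‖ ^ 2 * h)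
        * Real.sqrt (∑ l ∈ Finset.range (N + 1),
            ‖(f (l + 1) - f l) / h‖ ^ 2 * h) := by
  intro l hl
  have hhpos : 0 < h := by
    rw [hh]; positivity
  set a : ℕ → ℝ := fun j => ‖f j‖ with ha
  set d : ℕ → ℝ := fun j => ‖f (j + 1) - f j‖ with hd
  have ha0 : ∀ j, 0 ≤ a j := fun j => norm_nonneg _
  have hd0 : ∀ j, 0 ≤ d j := fun j => norm_nonneg _
  set A : ℝ := ∑ l ∈ Finset.range (N + 2), ‖f l‖ ^ 2 * h with hA
  set B : ℝ := ∑ l ∈ Finset.range (N + 1),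
      ‖(f (l + 1) - f l) / h‖ ^ 2 * h with hB
  have hAnn : 0 ≤ A := Finset.sum_nonneg fun i _ => by positivity
  have hBnn : 0 ≤ B := Finset.sum_nonneg fun i _ => by positivity
  -- step 1 : |f l|² ≤ S
  set S : ℝ := ∑ j ∈ Finset.range (N + 1), (a j + a (j + 1)) * d j with hS
  have hterm : ∀ j, a (j + 1) ^ 2 - a j ^ 2 ≤ (a j + a (j + 1)) * d j := by
    intro j
    have h1 : |a (j + 1) - a j| ≤ d j := by
      simpa [a, d] using abs_norm_sub_norm_le (f (j + 1)) (f j)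
    have h2 : a (j + 1) - a j ≤ d j := le_trans (le_abs_self _) h1
    nlinarith [ha0 j, ha0 (j + 1), hd0 j]
  have hstep1 : a l ^ 2 ≤ S := by
    have htel : ∑ j ∈ Finset.range l, (a (j + 1) ^ 2 - a j ^ 2) = a l ^ 2 := by
      rw [Finset.sum_range_sub (fun j => a j ^ 2)]
      simp [a, hf0]
    calc a l ^ 2 = ∑ j ∈ Finset.range l, (a (j + 1) ^ 2 - a j ^ 2) := htel.symm
      _ ≤ ∑ j ∈ Finset.range l, (a j + a (j + 1)) * d j :=
          Finset.sum_le_sum fun j _ => hterm j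
      _ ≤ S := Finset.sum_le_sum_of_subset_of_nonneg
          (Finset.range_subset_range.2 hl)
          (fun j _ _ => mul_nonneg (by positivity) (hd0 j))
  -- step 2 : S² ≤ 4 A B
  have hCS : S ^ 2 ≤ (∑ j ∈ Finset.range (N + 1), (a j + a (j + 1)) ^ 2)
      * ∑ j ∈ Finset.range (N + 1), d j ^ 2 :=
    Finset.sum_mul_sq_le_sq_mul_sq _ _ _
  have hsum1 : ∑ j ∈ Finset.range (N + 1), (a j + a (j + 1)) ^ 2 ≤ 4 * (A / h) := by
    have h1 : ∑ j ∈ Finset.range (N + 1), (a j + a (j + 1)) ^ 2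
        ≤ ∑ j ∈ Finset.range (N + 1), (2 * a j ^ 2 + 2 * a (j + 1) ^ 2) :=
      Finset.sum_le_sum fun j _ => by nlinarith [sq_nonneg (a j - a (j + 1))]
    have hAh : A / h = ∑ j ∈ Finset.range (N + 2), a j ^ 2 := by
      rw [hA, Finset.sum_div]
      exact Finset.sum_congr rfl fun j _ => by field_simp; rfl
    have h2 : ∑ j ∈ Finset.range (N + 1), a j ^ 2 ≤ A / h := by
      rw [hAh]
      exact Finset.sum_le_sum_of_subset_of_nonneg
        (Finset.range_subset_range.2 (by omega)) (fun j _ _ => sq_nonneg _)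
    have h3 : ∑ j ∈ Finset.range (N + 1), a (j + 1) ^ 2 ≤ A / h := by
      rw [hAh]
      have := Finset.sum_range_succ_comm (fun j => a j ^ 2) (N + 1)
      have h4 : ∑ j ∈ Finset.range (N + 2), a j ^ 2
          = a 0 ^ 2 + ∑ j ∈ Finset.range (N + 1), a (j + 1) ^ 2 := by
        rw [Finset.sum_range_succ' (fun j => a j ^ 2) (N + 1)]; ring
      nlinarith [sq_nonneg (a 0)]
    calc _ ≤ ∑ j ∈ Finset.range (N + 1), (2 * a j ^ 2 + 2 * a (j + 1) ^ 2) := h1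
      _ = 2 * (∑ j ∈ Finset.range (N + 1), a j ^ 2)
          + 2 * ∑ j ∈ Finset.range (N + 1), a (j + 1) ^ 2 := by
          rw [Finset.sum_add_distrib, Finset.mul_sum, Finset.mul_sum]
      _ ≤ 4 * (A / h) := by linarith
  have hsum2 : ∑ j ∈ Finset.range (N + 1), d j ^ 2 = h * B := by
    rw [hB, Finset.mul_sum]
    refine Finset.sum_congr rfl fun j _ => ?_
    have : ‖(f (j + 1) - f j) / h‖ = d j / h := by
      rw [norm_div]
      simp [d, Complex.norm_real, abs_of_pos hhpos]
    rw [this]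
    field_simp
  have hS2 : S ^ 2 ≤ 4 * (A * B) := by
    calc S ^ 2 ≤ _ := hCS
      _ ≤ (4 * (A / h)) * (h * B) := by
          apply mul_le_mul hsum1 (le_of_eq hsum2)
            (Finset.sum_nonneg fun j _ => sq_nonneg _) (by positivity)
      _ = 4 * (A * B) := by field_simp
  have hSnn : 0 ≤ S := Finset.sum_nonneg fun j _ =>
    mul_nonneg (by positivity) (hd0 j)
  have hfinal : S ≤ 2 * Real.sqrt A * Real.sqrt B := by
    have : S = Real.sqrt (S ^ 2) := (Real.sqrt_sq hSnn).symm
    rw [this]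
    calc Real.sqrt (S ^ 2) ≤ Real.sqrt (4 * (A * B)) := Real.sqrt_le_sqrt hS2
      _ = 2 * Real.sqrt A * Real.sqrt B := by
          rw [Real.sqrt_mul (by norm_num), Real.sqrt_mul hAnn]
          rw [show (4:ℝ) = 2^2 by norm_num, Real.sqrt_sq (by norm_num)]
          ring
  exact le_trans hstep1 hfinal
end

section
/- Let N ∈ ℕ, h = 1/(N+1), and let f : {0,1,…,N+1} → ℂ be a grid function with f(0) = f(N+1) = 0. Then the discrete L⁴-interpolation inequality holds: ‖f‖_{l⁴_h}⁴ ≤ 2 ‖f‖_h³ ‖δ₊f‖_h, i.e. ∑_{l=0}^{N+1} |f(l)|⁴ h ≤ 2 (∑_{l=0}^{N+1} |f(l)|² h)^{3/2} (∑_{l=0}^{N} |δ₊f(l)|² h)^{1/2}. -/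
/-- Discrete L⁴-interpolation inequality: for a grid function `f` on
`{0,1,…,N+1}` with homogeneous Dirichlet boundary conditions, with step size
`h = 1/(N+1)`, one has `‖f‖_{l⁴_h}⁴ ≤ 2 ‖f‖_h³ ‖δ₊f‖_h`. -/
theorem discrete_L4_interpolation (N : ℕ) (h : ℝ) (hh : h = 1 / (N + 1))
    (f : ℕ → ℂ) (hf0 : f 0 = 0) (hfN : f (N + 1) = 0) :
    ∑ l ∈ Finset.range (N + 2), ‖f l‖ ^ 4 * h ≤
      2 * (∑ l ∈ Finset.range (N + 2), ‖f l‖ ^ 2 * h) ^ ((3 : ℝ) / 2)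
        * (∑ l ∈ Finset.range (N + 1),
            ‖(f (l + 1) - f l) / h‖ ^ 2 * h) ^ ((1 : ℝ) / 2) := by
  have hpos : 0 < h := by rw [hh]; positivity
  set a : ℕ → ℝ := fun l => ‖f l‖ with ha
  have han : ∀ l, 0 ≤ a l := fun l => norm_nonneg _
  set A := ∑ l ∈ Finset.range (N + 2), a l ^ 2 * h with hA
  set B := ∑ l ∈ Finset.range (N + 1), ‖(f (l + 1) - f l) / h‖ ^ 2 * h with hB
  have hA0 : 0 ≤ A := Finset.sum_nonneg fun l _ => by positivity
  have hB0 : 0 ≤ B := Finset.sum_nonneg fun l _ => by positivity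
  have ha0 : a 0 = 0 := by simp [ha, hf0]
  -- sum of squared differences equals h * B
  have hdiff : ∑ j ∈ Finset.range (N + 1), ‖f (j + 1) - f j‖ ^ 2 = h * B := by
    rw [hB, Finset.mul_sum]
    refine Finset.sum_congr rfl fun j _ => ?_
    rw [norm_div, Complex.norm_real, Real.norm_eq_abs, abs_of_pos hpos, div_pow]
    field_simp
  -- sum bound for (a(j+1) + a j)^2
  have hsq : ∑ j ∈ Finset.range (N + 1), (a (j + 1) + a j) ^ 2 ≤ 4 * (A / h) := by
    have h1 : ∑ j ∈ Finset.range (N + 1), a (j + 1) ^ 2 ≤ A / h := by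
      have := Finset.sum_range_succ' (fun l => a l ^ 2) (N + 1)
      have hAh : A / h = ∑ l ∈ Finset.range (N + 2), a l ^ 2 := by
        rw [hA, Finset.sum_div]
        exact Finset.sum_congr rfl fun l _ => by field_simp
      rw [hAh, this, ha0]
      simp
    have h2 : ∑ j ∈ Finset.range (N + 1), a j ^ 2 ≤ A / h := by
      have hAh : A / h = ∑ l ∈ Finset.range (N + 2), a l ^ 2 := by
        rw [hA, Finset.sum_div]
        exact Finset.sum_congr rfl fun l _ => by field_simp
      rw [hAh]
      refine Finset.sum_le_sum_of_subset_of_nonneg ?_ ?_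
      · exact Finset.range_subset_range.mpr (by omega)
      · intro j _ _; positivity
    calc ∑ j ∈ Finset.range (N + 1), (a (j + 1) + a j) ^ 2
        ≤ ∑ j ∈ Finset.range (N + 1), (2 * a (j + 1) ^ 2 + 2 * a j ^ 2) := by
          refine Finset.sum_le_sum fun j _ => ?_
          nlinarith [sq_nonneg (a (j + 1) - a j)]
      _ = 2 * ∑ j ∈ Finset.range (N + 1), a (j + 1) ^ 2
            + 2 * ∑ j ∈ Finset.range (N + 1), a j ^ 2 := by
          rw [Finset.sum_add_distrib, Finset.mul_sum, Finset.mul_sum]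
      _ ≤ 4 * (A / h) := by linarith
  -- define D and bound it
  set D := ∑ j ∈ Finset.range (N + 1), (a (j + 1) + a j) * ‖f (j + 1) - f j‖
    with hD
  have hD0 : 0 ≤ D := Finset.sum_nonneg fun j _ => by positivity
  have hDsq : D ^ 2 ≤ 4 * A * B := by
    calc D ^ 2 ≤ (∑ j ∈ Finset.range (N + 1), (a (j + 1) + a j) ^ 2)
          * ∑ j ∈ Finset.range (N + 1), ‖f (j + 1) - f j‖ ^ 2 :=
        Finset.sum_mul_sq_le_sq_mul_sq _ _ _
      _ ≤ 4 * (A / h) * (h * B) := by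
          apply mul_le_mul hsq (le_of_eq hdiff) (Finset.sum_nonneg fun j _ => by positivity)
          positivity
      _ = 4 * A * B := by field_simp
  have hDle : D ≤ 2 * Real.sqrt A * Real.sqrt B := by
    nlinarith [Real.sq_sqrt hA0, Real.sq_sqrt hB0, Real.sqrt_nonneg A, Real.sqrt_nonneg B,
      mul_nonneg (Real.sqrt_nonneg A) (Real.sqrt_nonneg B), sq_nonneg (D - 2 * Real.sqrt A * Real.sqrt B)]
  -- pointwise bound
  have hpt : ∀ l ∈ Finset.range (N + 2), a l ^ 2 ≤ D := by
    intro l hl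
    have hlN : l ≤ N + 1 := by simpa [Nat.lt_succ_iff] using Finset.mem_range.mp hl
    have htel : a l ^ 2 = ∑ j ∈ Finset.range l, (a (j + 1) ^ 2 - a j ^ 2) := by
      rw [Finset.sum_range_sub (fun j => a j ^ 2), ha0]; ring
    calc a l ^ 2 = ∑ j ∈ Finset.range l, (a (j + 1) ^ 2 - a j ^ 2) := htel
      _ ≤ ∑ j ∈ Finset.range l, (a (j + 1) + a j) * ‖f (j + 1) - f j‖ := by
          refine Finset.sum_le_sum fun j _ => ?_
          have h1 : a (j + 1) ^ 2 - a j ^ 2 = (a (j + 1) + a j) * (a (j + 1) - a j) := by ring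
          rw [h1]
          refine mul_le_mul_of_nonneg_left ?_ (by positivity)
          calc a (j + 1) - a j ≤ |a (j + 1) - a j| := le_abs_self _
            _ ≤ ‖f (j + 1) - f j‖ := abs_norm_sub_norm_le _ _
      _ ≤ D := by
          apply Finset.sum_le_sum_of_subset_of_nonneg
          · exact Finset.range_subset_range.mpr hlN
          · intro j _ _
            positivity
  -- conclude
  have hfinal : ∑ l ∈ Finset.range (N + 2), a l ^ 4 * h
      ≤ 2 * Real.sqrt A * Real.sqrt B * A := by
    calc ∑ l ∈ Finset.range (N + 2), a l ^ 4 * h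
        ≤ ∑ l ∈ Finset.range (N + 2), (2 * Real.sqrt A * Real.sqrt B) * (a l ^ 2 * h) := by
          refine Finset.sum_le_sum fun l hl => ?_
          have : a l ^ 4 * h = a l ^ 2 * (a l ^ 2 * h) := by ring
          rw [this]
          exact mul_le_mul_of_nonneg_right (le_trans (hpt l hl) hDle) (by positivity)
      _ = 2 * Real.sqrt A * Real.sqrt B * A := by
          rw [← Finset.mul_sum]
  have hrA : A ^ ((3 : ℝ) / 2) = A * Real.sqrt A := by
    have : ((3 : ℝ) / 2) = 1 + 1 / 2 := by norm_num
    rw [this, Real.rpow_add' hA0 (by norm_num), Real.rpow_one, ← Real.sqrt_eq_rpow]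
  have hrB : B ^ ((1 : ℝ) / 2) = Real.sqrt B := (Real.sqrt_eq_rpow B).symm
  rw [hrA, hrB]
  calc ∑ l ∈ Finset.range (N + 2), ‖f l‖ ^ 4 * h
      = ∑ l ∈ Finset.range (N + 2), a l ^ 4 * h := rfl
    _ ≤ 2 * Real.sqrt A * Real.sqrt B * A := hfinal
    _ = 2 * (A * Real.sqrt A) * Real.sqrt B := by ring
end

section
/- Let N ∈ ℕ, h = 1/(N+1), λ ∈ {−1, 1}, and let f : {0,1,…,N+1} → ℂ be a grid function with f(0) = f(N+1) = 0. Then the discrete energy functional U^h(f) := (1/2)‖δ₊f‖_h² − (λ/4)‖f‖_{l⁴_h}⁴ satisfies the two-sided bound (1/4)‖δ₊f‖_h² − (1/4)‖f‖_h⁶ ≤ U^h(f) ≤ (3/4)‖δ₊f‖_h² + (1/4)‖f‖_h⁶. -/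
set_option maxHeartbeats 1000000


/-- Two-sided bound for the discrete energy functional
`U^h(f) = (1/2)‖δ₊f‖_h² − (λ/4)‖f‖_{l⁴_h}⁴` of a grid function with
homogeneous Dirichlet boundary conditions:
`(1/4)‖δ₊f‖_h² − (1/4)‖f‖_h⁶ ≤ U^h(f) ≤ (3/4)‖δ₊f‖_h² + (1/4)‖f‖_h⁶`. -/
theorem discrete_energy_two_sided_bound (N : ℕ) (h : ℝ) (hh : h = 1 / (N + 1))
    (lam : ℝ) (hlam : lam = 1 ∨ lam = -1)
    (f : ℕ → ℂ) (hf0 : f 0 = 0) (hfN : f (N + 1) = 0) :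
    (1 / 4) * (∑ l ∈ Finset.range (N + 1),
        ‖(f (l + 1) - f l) / h‖ ^ 2 * h)
      - (1 / 4) * Real.sqrt (∑ l ∈ Finset.range (N + 2),
          ‖f l‖ ^ 2 * h) ^ 6
    ≤ (1 / 2) * (∑ l ∈ Finset.range (N + 1),
        ‖(f (l + 1) - f l) / h‖ ^ 2 * h)
      - (lam / 4) * (∑ l ∈ Finset.range (N + 2), ‖f l‖ ^ 4 * h)
    ∧ (1 / 2) * (∑ l ∈ Finset.range (N + 1),
        ‖(f (l + 1) - f l) / h‖ ^ 2 * h)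
      - (lam / 4) * (∑ l ∈ Finset.range (N + 2), ‖f l‖ ^ 4 * h)
    ≤ (3 / 4) * (∑ l ∈ Finset.range (N + 1),
        ‖(f (l + 1) - f l) / h‖ ^ 2 * h)
      + (1 / 4) * Real.sqrt (∑ l ∈ Finset.range (N + 2),
          ‖f l‖ ^ 2 * h) ^ 6 := by
  have hp : 0 < h := by
    rw [hh]; positivity
  set g : ℕ → ℝ := fun l => ‖f l‖ with hg
  set d : ℕ → ℝ := fun l => ‖f (l + 1) - f l‖ with hd
  have hgnn : ∀ l, 0 ≤ g l := fun l => norm_nonneg _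
  have hdnn : ∀ l, 0 ≤ d l := fun l => norm_nonneg _
  set B : ℝ := ∑ l ∈ Finset.range (N + 2), g l ^ 2 with hB
  set E : ℝ := ∑ l ∈ Finset.range (N + 1), d l ^ 2 with hE
  have hBnn : 0 ≤ B := Finset.sum_nonneg fun l _ => sq_nonneg _
  have hEnn : 0 ≤ E := Finset.sum_nonneg fun l _ => sq_nonneg _
  have hg0 : g 0 = 0 := by simp [hg, hf0]
  -- pointwise bound: g m ^ 2 ≤ ∑ (g(l+1)+g l) * d l
  have key : ∀ m ∈ Finset.range (N + 2),
      g m ^ 2 ≤ ∑ l ∈ Finset.range (N + 1), (g (l + 1) + g l) * d l := by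
    intro m hm
    have hm' : m ≤ N + 1 := Nat.lt_succ_iff.mp (Finset.mem_range.mp hm)
    have tele : g m ^ 2 = ∑ l ∈ Finset.range m, (g (l + 1) ^ 2 - g l ^ 2) := by
      rw [Finset.sum_range_sub (fun l => g l ^ 2), hg0]; ring
    rw [tele]
    have step1 : ∑ l ∈ Finset.range m, (g (l + 1) ^ 2 - g l ^ 2)
        ≤ ∑ l ∈ Finset.range m, (g (l + 1) + g l) * d l := by
      apply Finset.sum_le_sum
      intro l _
      have h1 : g (l + 1) - g l ≤ d l := by
        simpa [hg, hd] using norm_sub_norm_le (f (l + 1)) (f l)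
      nlinarith [hgnn (l + 1), hgnn l, hdnn l]
    refine step1.trans (Finset.sum_le_sum_of_subset_of_nonneg ?_ ?_)
    · exact Finset.range_subset_range.mpr hm'
    · intro l _ _
      exact mul_nonneg (by positivity) (hdnn l)
  -- Cauchy-Schwarz
  have cs : (∑ l ∈ Finset.range (N + 1), (g (l + 1) + g l) * d l) ^ 2
      ≤ (∑ l ∈ Finset.range (N + 1), (g (l + 1) + g l) ^ 2) * E :=
    Finset.sum_mul_sq_le_sq_mul_sq _ _ _
  -- bound the first factor by 4B
  have fac : ∑ l ∈ Finset.range (N + 1), (g (l + 1) + g l) ^ 2 ≤ 4 * B := by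
    have e1 : ∑ l ∈ Finset.range (N + 1), g (l + 1) ^ 2 ≤ B := by
      have := Finset.sum_range_succ' (fun l => g l ^ 2) (N + 1)
      rw [hB, this, hg0]
      simp
    have e2 : ∑ l ∈ Finset.range (N + 1), g l ^ 2 ≤ B := by
      apply Finset.sum_le_sum_of_subset_of_nonneg
      · exact Finset.range_subset_range.mpr (by omega)
      · intro l _ _; exact sq_nonneg _
    have e3 : ∑ l ∈ Finset.range (N + 1), (g (l + 1) + g l) ^ 2
        ≤ ∑ l ∈ Finset.range (N + 1), (2 * g (l + 1) ^ 2 + 2 * g l ^ 2) := by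
      apply Finset.sum_le_sum
      intro l _
      nlinarith [sq_nonneg (g (l + 1) - g l)]
    rw [Finset.sum_add_distrib, ← Finset.mul_sum, ← Finset.mul_sum] at e3
    linarith
  -- so (g m ^ 2) ^ 2 ≤ 4 B E for all m in range
  have sb := Real.sqrt_nonneg B
  have se := Real.sqrt_nonneg E
  have hsb : Real.sqrt B ^ 2 = B := Real.sq_sqrt hBnn
  have hse : Real.sqrt E ^ 2 = E := Real.sq_sqrt hEnn
  have key2 : ∀ m ∈ Finset.range (N + 2), g m ^ 2 ≤ 2 * Real.sqrt B * Real.sqrt E := by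
    intro m hm
    have h1 := key m hm
    have h2 : (g m ^ 2) ^ 2 ≤ 4 * B * E := by
      calc (g m ^ 2) ^ 2 ≤ (∑ l ∈ Finset.range (N + 1), (g (l + 1) + g l) * d l) ^ 2 := by
            apply pow_le_pow_left₀ (sq_nonneg _) h1
        _ ≤ (∑ l ∈ Finset.range (N + 1), (g (l + 1) + g l) ^ 2) * E := cs
        _ ≤ 4 * B * E := by
            apply mul_le_mul_of_nonneg_right fac hEnn
    have h4 : (4 : ℝ) * B * E = (2 * Real.sqrt B * Real.sqrt E) ^ 2 := by
      rw [mul_pow, mul_pow, hsb, hse]; ring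
    have h5 : g m ^ 2 = Real.sqrt ((g m ^ 2) ^ 2) := (Real.sqrt_sq (sq_nonneg _)).symm
    rw [h5]
    calc Real.sqrt ((g m ^ 2) ^ 2) ≤ Real.sqrt (4 * B * E) := Real.sqrt_le_sqrt h2
      _ = 2 * Real.sqrt B * Real.sqrt E := by
          rw [h4, Real.sqrt_sq (mul_nonneg (mul_nonneg (by norm_num) sb) se)]
  -- sum of fourth powers
  have q4 : ∑ l ∈ Finset.range (N + 2), g l ^ 4
      ≤ 2 * Real.sqrt B * Real.sqrt E * B := by
    calc ∑ l ∈ Finset.range (N + 2), g l ^ 4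
        ≤ ∑ l ∈ Finset.range (N + 2), (2 * Real.sqrt B * Real.sqrt E) * g l ^ 2 := by
          apply Finset.sum_le_sum
          intro l hl
          have := key2 l hl
          have : g l ^ 4 = g l ^ 2 * g l ^ 2 := by ring
          rw [this]
          exact mul_le_mul_of_nonneg_right (key2 l hl) (sq_nonneg _)
      _ = 2 * Real.sqrt B * Real.sqrt E * B := by rw [← Finset.mul_sum]
  -- now rewrite the statement sums
  have hDsum : ∑ l ∈ Finset.range (N + 1), ‖(f (l + 1) - f l) / h‖ ^ 2 * h
      = E / h := by
    rw [hE, Finset.sum_div]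
    apply Finset.sum_congr rfl
    intro l _
    rw [norm_div, Complex.norm_real, Real.norm_eq_abs, abs_of_pos hp]
    field_simp
    ring
  have hAsum : ∑ l ∈ Finset.range (N + 2), ‖f l‖ ^ 2 * h = B * h := by
    rw [hB, Finset.sum_mul]
  have hQsum : ∑ l ∈ Finset.range (N + 2), ‖f l‖ ^ 4 * h
      = (∑ l ∈ Finset.range (N + 2), g l ^ 4) * h := by
    rw [Finset.sum_mul]
  set D : ℝ := ∑ l ∈ Finset.range (N + 1), ‖(f (l + 1) - f l) / h‖ ^ 2 * h with hDdef
  set A : ℝ := ∑ l ∈ Finset.range (N + 2), ‖f l‖ ^ 2 * h with hAdef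
  set Q : ℝ := ∑ l ∈ Finset.range (N + 2), ‖f l‖ ^ 4 * h with hQdef
  have hQnn : 0 ≤ Q := Finset.sum_nonneg fun l _ => by positivity
  have hAnn : 0 ≤ A := Finset.sum_nonneg fun l _ => by positivity
  have hA6 : Real.sqrt A ^ 6 = A ^ 3 := by
    have : Real.sqrt A ^ 6 = (Real.sqrt A ^ 2) ^ 3 := by ring
    rw [this, Real.sq_sqrt hAnn]
  -- the key analytic bound : Q ≤ D + A^3
  have main : Q ≤ D + A ^ 3 := by
    have hQle : Q ≤ 2 * Real.sqrt B * Real.sqrt E * B * h := by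
      rw [hQsum]
      exact mul_le_mul_of_nonneg_right q4 hp.le
    have hD : D = E / h := hDsum
    have hA : A = B * h := hAsum
    have amgm : 2 * Real.sqrt B * Real.sqrt E * B * h ≤ E / h + (B * h) ^ 3 := by
      set x := Real.sqrt B with hxdef
      set y := Real.sqrt E with hydef
      rw [div_add' _ _ _ (ne_of_gt hp), le_div_iff₀ hp, ← hsb, ← hse]
      nlinarith [sq_nonneg (x ^ 3 * h ^ 2 - y), sb, se, hp.le, sq_nonneg h,
        mul_nonneg (mul_nonneg sb sb) sb, mul_nonneg sb se]
    rw [hD, hA]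
    exact hQle.trans amgm
  rw [hA6]
  have hDnn : 0 ≤ D := Finset.sum_nonneg fun l _ => by positivity
  have hA3 : 0 ≤ A ^ 3 := pow_nonneg hAnn 3
  rcases hlam with hl | hl <;> rw [hl] <;> constructor <;> linarith [hQnn, main, hDnn, hA3]
end

section
/- Let N ∈ ℕ, h = 1/(N+1), and let u : {0,1,…,N+1} → ℂ be a grid function with u(0) = u(N+1) = 0. With w(l) := |u(l)|² u(l), the following discrete symmetry identity holds: ∑_{l=0}^{N} Re[ conj(δ₊u(l)) · i · δ₊w(l) ] h + ∑_{l=1}^{N} Re[ conj(δ₊δ₋u(l)) · i · w(l) ] h = 0. (This is the vanishing of the nonlinear energy-drift terms U_a + U_d for the central difference scheme under homogeneous Dirichlet boundary conditions.) -/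
/-- Discrete summation by parts (Abel) identity. -/
lemma abel_sbp (u w : ℕ → ℂ) (n : ℕ) :
    ∑ l ∈ Finset.range (n + 1), (starRingEnd ℂ) (u (l + 1) - u l) * (w (l + 1) - w l)
      + ∑ l ∈ Finset.Icc 1 n, (starRingEnd ℂ) (u (l + 1) - 2 * u l + u (l - 1)) * w l
      = (starRingEnd ℂ) (u (n + 1) - u n) * w (n + 1)
        - (starRingEnd ℂ) (u 1 - u 0) * w 0 := by
  induction n with
  | zero => simp; ring
  | succ n ih =>
      rw [Finset.sum_range_succ, Finset.sum_Icc_succ_top (by omega : 1 ≤ n + 1)]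
      have hidx : n + 1 - 1 = n := by omega
      rw [hidx]
      have : ∑ l ∈ Finset.range (n + 1),
            (starRingEnd ℂ) (u (l + 1) - u l) * (w (l + 1) - w l)
          = (starRingEnd ℂ) (u (n + 1) - u n) * w (n + 1)
            - (starRingEnd ℂ) (u 1 - u 0) * w 0
            - ∑ l ∈ Finset.Icc 1 n,
                (starRingEnd ℂ) (u (l + 1) - 2 * u l + u (l - 1)) * w l := by
        rw [← ih]; ring
      rw [this]
      simp only [map_sub, map_add, map_mul, Complex.conj_ofNat]
      ring

/-- Vanishing of the nonlinear energy-drift terms `U_a + U_d` for the central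
difference scheme under homogeneous Dirichlet boundary conditions: with
`w(l) = |u(l)|² u(l)`,
`∑_{l=0}^{N} Re[conj(δ₊u(l)) i δ₊w(l)] h + ∑_{l=1}^{N} Re[conj(δ₊δ₋u(l)) i w(l)] h = 0`. -/
theorem discrete_energy_drift_vanishes (N : ℕ) (h : ℝ) (hh : h = 1 / (N + 1))
    (u : ℕ → ℂ) (hu0 : u 0 = 0) (huN : u (N + 1) = 0)
    (w : ℕ → ℂ) (hw : ∀ l, w l = (‖u l‖ : ℂ) ^ 2 * u l) :
    ∑ l ∈ Finset.range (N + 1),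
        ((starRingEnd ℂ) ((u (l + 1) - u l) / (h : ℂ)) * Complex.I
          * ((w (l + 1) - w l) / (h : ℂ))).re * h
      + ∑ l ∈ Finset.Icc 1 N,
          ((starRingEnd ℂ) ((u (l + 1) - 2 * u l + u (l - 1)) / (h : ℂ) ^ 2) * Complex.I
            * w l).re * h
      = 0 := by
  have hne : h ≠ 0 := by
    rw [hh]; positivity
  have hcne : (h : ℂ) ≠ 0 := by exact_mod_cast hne
  have hw0 : w 0 = 0 := by rw [hw 0, hu0]; ring
  have hwN : w (N + 1) = 0 := by rw [hw (N + 1), huN]; ring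
  have key := abel_sbp u w N
  rw [hw0, hwN] at key
  simp only [mul_zero, sub_zero] at key
  -- rewrite each real-part term so the sums can be combined
  have e1 : ∀ l : ℕ,
      ((starRingEnd ℂ) ((u (l + 1) - u l) / (h : ℂ)) * Complex.I
          * ((w (l + 1) - w l) / (h : ℂ))).re * h
      = ((Complex.I / (h : ℂ))
          * ((starRingEnd ℂ) (u (l + 1) - u l) * (w (l + 1) - w l))).re := by
    intro l
    have : (starRingEnd ℂ) ((u (l + 1) - u l) / (h : ℂ)) * Complex.I
          * ((w (l + 1) - w l) / (h : ℂ)) * (h : ℂ)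
        = (Complex.I / (h : ℂ))
          * ((starRingEnd ℂ) (u (l + 1) - u l) * (w (l + 1) - w l)) := by
      rw [map_div₀, Complex.conj_ofReal]
      field_simp
    rw [← this]
    simp [Complex.mul_re]
  have e2 : ∀ l : ℕ,
      ((starRingEnd ℂ) ((u (l + 1) - 2 * u l + u (l - 1)) / (h : ℂ) ^ 2) * Complex.I
          * w l).re * h
      = ((Complex.I / (h : ℂ))
          * ((starRingEnd ℂ) (u (l + 1) - 2 * u l + u (l - 1)) * w l)).re := by
    intro l
    have : (starRingEnd ℂ) ((u (l + 1) - 2 * u l + u (l - 1)) / (h : ℂ) ^ 2) * Complex.I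
          * w l * (h : ℂ)
        = (Complex.I / (h : ℂ))
          * ((starRingEnd ℂ) (u (l + 1) - 2 * u l + u (l - 1)) * w l) := by
      rw [map_div₀, map_pow, Complex.conj_ofReal]
      field_simp
    rw [← this]
    simp [Complex.mul_re]
  simp only [e1, e2]
  rw [← Complex.re_sum, ← Complex.re_sum, ← Complex.add_re,
    ← Finset.mul_sum, ← Finset.mul_sum, ← mul_add, key]
  simp
end

section
/- Let f : ℝ → ℂ be continuously differentiable on [0,1] with f(0) = f(1) = 0. Then the Gagliardo–Nirenberg inequality holds: ‖f‖_{L∞}² ≤ 2 ‖f‖_{L²} ‖f'‖_{L²}, i.e. sup_{x ∈ [0,1]} |f(x)|² ≤ 2 (∫₀¹ |f(x)|² dx)^{1/2} (∫₀¹ |f'(x)|² dx)^{1/2}. -/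
open intervalIntegral

/-- Gagliardo–Nirenberg inequality on `[0,1]`: if `f` is continuously
differentiable on `[0,1]` (with derivative `f'`) and `f 0 = f 1 = 0`, then
`sup_{x ∈ [0,1]} |f x|² ≤ 2 (∫₀¹ |f|²)^{1/2} (∫₀¹ |f'|²)^{1/2}`. -/
theorem gagliardo_nirenberg (f f' : ℝ → ℂ)
    (hderiv : ∀ x ∈ Set.Icc (0 : ℝ) 1, HasDerivWithinAt f (f' x) (Set.Icc 0 1) x)
    (hcont : ContinuousOn f' (Set.Icc 0 1))
    (hf0 : f 0 = 0) (hf1 : f 1 = 0) :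
    ∀ x ∈ Set.Icc (0 : ℝ) 1, ‖f x‖ ^ 2 ≤
      2 * Real.sqrt (∫ x in (0 : ℝ)..1, ‖f x‖ ^ 2)
        * Real.sqrt (∫ x in (0 : ℝ)..1, ‖f' x‖ ^ 2) := by
  have hfc : ContinuousOn f (Set.Icc 0 1) := fun t ht => (hderiv t ht).continuousWithinAt
  -- the inner-product integrand
  set g' : ℝ → ℝ := fun t => 2 * (inner ℝ (f t) (f' t) : ℝ) with hg'def
  have hg'cont : ContinuousOn g' (Set.Icc 0 1) :=
    (continuousOn_const.mul (hfc.inner hcont))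
  have hffcont : ContinuousOn (fun t => ‖f t‖ * ‖f' t‖) (Set.Icc 0 1) :=
    hfc.norm.mul hcont.norm
  intro x hx
  obtain ⟨hx0, hx1⟩ := hx
  -- FTC: ‖f x‖ ^ 2 = ∫ t in 0..x, g' t
  have hsub : Set.Icc (0 : ℝ) x ⊆ Set.Icc 0 1 := Set.Icc_subset_Icc le_rfl hx1
  have huIcc : Set.uIcc (0 : ℝ) x = Set.Icc 0 x := Set.uIcc_of_le hx0
  have hFTC : ∫ t in (0 : ℝ)..x, g' t = ‖f x‖ ^ 2 - ‖f 0‖ ^ 2 := by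
    apply integral_eq_sub_of_hasDerivAt_of_le hx0
    · exact ((hfc.mono hsub).norm.pow 2)
    · intro t ht
      have htI : t ∈ Set.Icc (0 : ℝ) 1 := hsub (Set.Ioo_subset_Icc_self ht)
      have h1 : HasDerivWithinAt (fun t => (inner ℝ (f t) (f t) : ℝ))
          ((inner ℝ (f t) (f' t) : ℝ) + (inner ℝ (f' t) (f t) : ℝ)) (Set.Icc 0 1) t :=
        (hderiv t htI).inner ℝ (hderiv t htI)
      have h2 : HasDerivAt (fun t => (inner ℝ (f t) (f t) : ℝ))
          ((inner ℝ (f t) (f' t) : ℝ) + (inner ℝ (f' t) (f t) : ℝ)) t :=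
        h1.hasDerivAt (Icc_mem_nhds ht.1 (lt_of_lt_of_le ht.2 hx1))
      have h3 : (fun t => (inner ℝ (f t) (f t) : ℝ)) = fun t => ‖f t‖ ^ 2 := by
        funext t; exact real_inner_self_eq_norm_sq (f t)
      rw [h3] at h2
      have heq : g' t = (inner ℝ (f t) (f' t) : ℝ) + (inner ℝ (f' t) (f t) : ℝ) := by
        simp only [hg'def]
        rw [real_inner_comm (f' t) (f t)]
        ring
      rw [heq]
      exact h2
    · exact (hg'cont.mono (huIcc ▸ hsub)).intervalIntegrable
  have hfx : ‖f x‖ ^ 2 = ∫ t in (0 : ℝ)..x, g' t := by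
    rw [hFTC, hf0]; simp
  -- bound by the integral of 2‖f‖‖f'‖ on [0,x], then on [0,1]
  have hIx : IntervalIntegrable (fun t => 2 * (‖f t‖ * ‖f' t‖)) MeasureTheory.volume 0 x :=
    ((continuousOn_const.mul hffcont).mono (huIcc ▸ hsub)).intervalIntegrable
  have hI1 : IntervalIntegrable (fun t => 2 * (‖f t‖ * ‖f' t‖)) MeasureTheory.volume 0 1 :=
    ((continuousOn_const.mul hffcont).mono
      (by rw [Set.uIcc_of_le zero_le_one])).intervalIntegrable
  have step1 : (∫ t in (0 : ℝ)..x, g' t) ≤ ∫ t in (0 : ℝ)..x, 2 * (‖f t‖ * ‖f' t‖) := by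
    apply integral_mono_on hx0
    · exact (hg'cont.mono (huIcc ▸ hsub)).intervalIntegrable
    · exact hIx
    · intro t ht
      have := real_inner_le_norm (f t) (f' t)
      simp only [hg'def]
      linarith
  have step2 : (∫ t in (0 : ℝ)..x, 2 * (‖f t‖ * ‖f' t‖)) ≤
      ∫ t in (0 : ℝ)..1, 2 * (‖f t‖ * ‖f' t‖) := by
    have hsplit : (∫ t in (0 : ℝ)..1, 2 * (‖f t‖ * ‖f' t‖)) =
        (∫ t in (0 : ℝ)..x, 2 * (‖f t‖ * ‖f' t‖)) +
        ∫ t in x..(1 : ℝ), 2 * (‖f t‖ * ‖f' t‖) :=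
      (integral_add_adjacent_intervals hIx (hI1.mono_set
        (Set.uIcc_subset_uIcc (by rw [Set.uIcc_of_le zero_le_one]; exact ⟨hx0, hx1⟩)
          Set.right_mem_uIcc))).symm
    have hpos : 0 ≤ ∫ t in x..(1 : ℝ), 2 * (‖f t‖ * ‖f' t‖) := by
      apply integral_nonneg hx1
      intro t ht; positivity
    linarith
  -- Cauchy–Schwarz
  have hmeasf : MeasureTheory.AEStronglyMeasurable f
      (MeasureTheory.volume.restrict (Set.Ioc (0:ℝ) 1)) :=
    (hfc.mono Set.Ioc_subset_Icc_self).aestronglyMeasurable measurableSet_Ioc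
  have hmeasf' : MeasureTheory.AEStronglyMeasurable f'
      (MeasureTheory.volume.restrict (Set.Ioc (0:ℝ) 1)) :=
    (hcont.mono Set.Ioc_subset_Icc_self).aestronglyMeasurable measurableSet_Ioc
  have hfin : MeasureTheory.IsFiniteMeasure
      (MeasureTheory.volume.restrict (Set.Ioc (0:ℝ) 1)) := by
    constructor
    rw [MeasureTheory.Measure.restrict_apply_univ, Real.volume_Ioc]
    simp
  obtain ⟨C, hC⟩ := isCompact_Icc.exists_bound_of_continuousOn hfc
  obtain ⟨C', hC'⟩ := isCompact_Icc.exists_bound_of_continuousOn hcont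
  have hmemf : MeasureTheory.MemLp f (ENNReal.ofReal 2)
      (MeasureTheory.volume.restrict (Set.Ioc (0:ℝ) 1)) :=
    MeasureTheory.MemLp.of_bound hmeasf C
      ((MeasureTheory.ae_restrict_iff' measurableSet_Ioc).2
        (MeasureTheory.ae_of_all _ fun t ht => hC t (Set.Ioc_subset_Icc_self ht)))
  have hmemf' : MeasureTheory.MemLp f' (ENNReal.ofReal 2)
      (MeasureTheory.volume.restrict (Set.Ioc (0:ℝ) 1)) :=
    MeasureTheory.MemLp.of_bound hmeasf' C'
      ((MeasureTheory.ae_restrict_iff' measurableSet_Ioc).2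
        (MeasureTheory.ae_of_all _ fun t ht => hC' t (Set.Ioc_subset_Icc_self ht)))
  have hpq : Real.HolderConjugate 2 2 := Real.HolderConjugate.two_two
  have hCS := MeasureTheory.integral_mul_norm_le_Lp_mul_Lq hpq hmemf hmemf'
  -- rewrite everything in terms of set integrals over Ioc 0 1
  have e1 : (∫ t in (0 : ℝ)..1, 2 * (‖f t‖ * ‖f' t‖)) =
      2 * ∫ t in Set.Ioc (0:ℝ) 1, ‖f t‖ * ‖f' t‖ := by
    rw [integral_of_le zero_le_one, ← MeasureTheory.integral_const_mul]
  have e2 : (∫ t in (0 : ℝ)..1, ‖f t‖ ^ 2) =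
      ∫ t in Set.Ioc (0:ℝ) 1, ‖f t‖ ^ (2:ℝ) := by
    rw [integral_of_le zero_le_one]
    refine MeasureTheory.integral_congr_ae (MeasureTheory.ae_of_all _ fun t => ?_)
    simp [Real.rpow_two]
  have e3 : (∫ t in (0 : ℝ)..1, ‖f' t‖ ^ 2) =
      ∫ t in Set.Ioc (0:ℝ) 1, ‖f' t‖ ^ (2:ℝ) := by
    rw [integral_of_le zero_le_one]
    refine MeasureTheory.integral_congr_ae (MeasureTheory.ae_of_all _ fun t => ?_)
    simp [Real.rpow_two]
  have hnn2 : 0 ≤ ∫ t in Set.Ioc (0:ℝ) 1, ‖f t‖ ^ (2:ℝ) :=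
    MeasureTheory.integral_nonneg fun t => Real.rpow_nonneg (norm_nonneg _) _
  have hnn3 : 0 ≤ ∫ t in Set.Ioc (0:ℝ) 1, ‖f' t‖ ^ (2:ℝ) :=
    MeasureTheory.integral_nonneg fun t => Real.rpow_nonneg (norm_nonneg _) _
  have hsqrt2 : Real.sqrt (∫ t in (0 : ℝ)..1, ‖f t‖ ^ 2) =
      (∫ t in Set.Ioc (0:ℝ) 1, ‖f t‖ ^ (2:ℝ)) ^ ((1:ℝ)/2) := by
    rw [e2, Real.sqrt_eq_rpow]
  have hsqrt3 : Real.sqrt (∫ t in (0 : ℝ)..1, ‖f' t‖ ^ 2) =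
      (∫ t in Set.Ioc (0:ℝ) 1, ‖f' t‖ ^ (2:ℝ)) ^ ((1:ℝ)/2) := by
    rw [e3, Real.sqrt_eq_rpow]
  have habs : ‖f x‖ ^ 2 = ‖f x‖ ^ 2 := rfl
  rw [habs, hsqrt2, hsqrt3, hfx]
  calc (∫ t in (0 : ℝ)..x, g' t)
      ≤ ∫ t in (0 : ℝ)..1, 2 * (‖f t‖ * ‖f' t‖) := step1.trans step2
    _ = 2 * ∫ t in Set.Ioc (0:ℝ) 1, ‖f t‖ * ‖f' t‖ := e1
    _ ≤ 2 * ((∫ t in Set.Ioc (0:ℝ) 1, ‖f t‖ ^ (2:ℝ)) ^ ((1:ℝ)/2) *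
          (∫ t in Set.Ioc (0:ℝ) 1, ‖f' t‖ ^ (2:ℝ)) ^ ((1:ℝ)/2)) := by
        apply mul_le_mul_of_nonneg_left _ (by norm_num : (0:ℝ) ≤ 2)
        exact hCS
    _ = _ := by ring
end

section
/- Let f : ℝ → ℂ be continuously differentiable on [0,1] with f(0) = f(1) = 0. Then the L⁴-interpolation inequality holds: ‖f‖_{L⁴}⁴ ≤ 2 ‖f‖_{L²}³ ‖f'‖_{L²}, i.e. ∫₀¹ |f(x)|⁴ dx ≤ 2 (∫₀¹ |f(x)|² dx)^{3/2} (∫₀¹ |f'(x)|² dx)^{1/2}. -/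
open intervalIntegral

/-- L⁴-interpolation inequality on `[0,1]`: if `f` is continuously
differentiable on `[0,1]` (with derivative `f'`) and `f 0 = f 1 = 0`, then
`∫₀¹ |f|⁴ ≤ 2 (∫₀¹ |f|²)^{3/2} (∫₀¹ |f'|²)^{1/2}`. -/
theorem L4_interpolation (f f' : ℝ → ℂ)
    (hderiv : ∀ x ∈ Set.Icc (0 : ℝ) 1, HasDerivWithinAt f (f' x) (Set.Icc 0 1) x)
    (hcont : ContinuousOn f' (Set.Icc 0 1))
    (hf0 : f 0 = 0) (hf1 : f 1 = 0) :
    (∫ x in (0 : ℝ)..1, ‖f x‖ ^ 4) ≤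
      2 * (∫ x in (0 : ℝ)..1, ‖f x‖ ^ 2) ^ ((3 : ℝ) / 2)
        * (∫ x in (0 : ℝ)..1, ‖f' x‖ ^ 2) ^ ((1 : ℝ) / 2) := by
  have hcontf : ContinuousOn f (Set.Icc 0 1) := fun t ht => (hderiv t ht).continuousWithinAt
  -- abbreviations
  set G : ℝ → ℝ := fun t => (f t).re * (f t).re + (f t).im * (f t).im with hG
  set D : ℝ → ℝ := fun t =>
    ((f' t).re * (f t).re + (f t).re * (f' t).re) +
      ((f' t).im * (f t).im + (f t).im * (f' t).im) with hD
  have creF : ContinuousOn (fun t => (f t).re) (Set.Icc 0 1) :=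
    Complex.continuous_re.comp_continuousOn hcontf
  have cimF : ContinuousOn (fun t => (f t).im) (Set.Icc 0 1) :=
    Complex.continuous_im.comp_continuousOn hcontf
  have creF' : ContinuousOn (fun t => (f' t).re) (Set.Icc 0 1) :=
    Complex.continuous_re.comp_continuousOn hcont
  have cimF' : ContinuousOn (fun t => (f' t).im) (Set.Icc 0 1) :=
    Complex.continuous_im.comp_continuousOn hcont
  have hcontG : ContinuousOn G (Set.Icc 0 1) := (creF.mul creF).add (cimF.mul cimF)
  have hcontD : ContinuousOn D (Set.Icc 0 1) :=
    ((creF'.mul creF).add (creF.mul creF')).add ((cimF'.mul cimF).add (cimF.mul cimF'))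
  have hGderiv : ∀ t ∈ Set.Icc (0:ℝ) 1, HasDerivWithinAt G (D t) (Set.Icc 0 1) t := by
    intro t ht
    have hre : HasDerivWithinAt (fun s => (f s).re) ((f' t).re) (Set.Icc 0 1) t :=
      (Complex.reCLM.hasFDerivAt.comp_hasDerivWithinAt t (hderiv t ht))
    have him : HasDerivWithinAt (fun s => (f s).im) ((f' t).im) (Set.Icc 0 1) t :=
      (Complex.imCLM.hasFDerivAt.comp_hasDerivWithinAt t (hderiv t ht))
    exact (hre.mul hre).add (him.mul him)
  -- pointwise bound on D
  have hDbound : ∀ t ∈ Set.Icc (0:ℝ) 1, |D t| ≤ 2 * (‖f t‖ * ‖f' t‖) := by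
    intro t _
    have h1 : D t = 2 * ((starRingEnd ℂ) (f t) * f' t).re := by
      simp [hD, Complex.mul_re, Complex.conj_re, Complex.conj_im]; ring
    have h2 : |((starRingEnd ℂ) (f t) * f' t).re| ≤ ‖(starRingEnd ℂ) (f t) * f' t‖ :=
      Complex.abs_re_le_norm _
    have h3 : ‖(starRingEnd ℂ) (f t) * f' t‖ = ‖f t‖ * ‖f' t‖ := by
      rw [norm_mul, RCLike.norm_conj]
    rw [h1, abs_mul, abs_two]
    exact mul_le_mul_of_nonneg_left (h3 ▸ h2) (by norm_num)
  -- integrability pieces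
  have hintH : IntervalIntegrable (fun t => 2 * (‖f t‖ * ‖f' t‖)) MeasureTheory.volume 0 1 := by
    apply ContinuousOn.intervalIntegrable
    rw [Set.uIcc_of_le (by norm_num : (0:ℝ) ≤ 1)]
    exact (continuousOn_const.mul (hcontf.norm.mul hcont.norm))
  -- the key pointwise estimate
  set C : ℝ := ∫ t in (0:ℝ)..1, 2 * (‖f t‖ * ‖f' t‖) with hC
  have key : ∀ x ∈ Set.Icc (0:ℝ) 1, ‖f x‖ ^ 2 ≤ C := by
    intro x hx
    obtain ⟨hx0, hx1⟩ := hx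
    have hsub : Set.Icc (0:ℝ) x ⊆ Set.Icc 0 1 := Set.Icc_subset_Icc le_rfl hx1
    have hintD : IntervalIntegrable D MeasureTheory.volume 0 x := by
      apply ContinuousOn.intervalIntegrable
      rw [Set.uIcc_of_le hx0]
      exact hcontD.mono hsub
    have hftc : ∫ t in (0:ℝ)..x, D t = G x - G 0 := by
      apply integral_eq_sub_of_hasDeriv_right_of_le hx0 ((hcontG.mono hsub))
      · intro t ht
        have ht' : t ∈ Set.Icc (0:ℝ) 1 := ⟨ht.1.le, (ht.2.trans_le hx1).le⟩
        have : HasDerivAt G (D t) t :=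
          (hGderiv t ht').hasDerivAt (Icc_mem_nhds ht.1 (ht.2.trans_le hx1))
        exact this.hasDerivWithinAt
      · exact hintD
    have hG0 : G 0 = 0 := by simp [hG, hf0]
    have hGx : G x = ‖f x‖ ^ 2 := by
      rw [hG]; simp only []
      rw [← Complex.normSq_apply, ← Complex.sq_norm]
    have h1 : ‖f x‖ ^ 2 = ∫ t in (0:ℝ)..x, D t := by rw [hftc, hG0, hGx, sub_zero]
    have hint2 : IntervalIntegrable (fun t => 2 * (‖f t‖ * ‖f' t‖)) MeasureTheory.volume 0 x := by
      apply ContinuousOn.intervalIntegrable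
      rw [Set.uIcc_of_le hx0]
      exact (continuousOn_const.mul ((hcontf.mono hsub).norm.mul (hcont.mono hsub).norm))
    have h2 : ∫ t in (0:ℝ)..x, D t ≤ ∫ t in (0:ℝ)..x, 2 * (‖f t‖ * ‖f' t‖) := by
      apply integral_mono_on hx0 hintD hint2
      intro t ht
      exact (le_abs_self _).trans (hDbound t (hsub ht))
    have h3 : (∫ t in (0:ℝ)..x, 2 * (‖f t‖ * ‖f' t‖)) ≤ C := by
      rw [hC]
      apply integral_mono_interval le_rfl hx0 hx1 _ hintH
      filter_upwards with t
      positivity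
    linarith [h1 ▸ (h2.trans h3)]
  -- abbreviate the three integrals
  set A : ℝ := ∫ x in (0:ℝ)..1, ‖f x‖ ^ 2 with hA
  set B : ℝ := ∫ x in (0:ℝ)..1, ‖f' x‖ ^ 2 with hB
  -- step B : LHS ≤ C * A
  have hintf2 : IntervalIntegrable (fun x => ‖f x‖ ^ 2) MeasureTheory.volume 0 1 := by
    apply ContinuousOn.intervalIntegrable
    rw [Set.uIcc_of_le (by norm_num : (0:ℝ) ≤ 1)]
    exact (hcontf.norm.pow 2).congr (fun x _ => rfl)
  have hintf4 : IntervalIntegrable (fun x => ‖f x‖ ^ 4) MeasureTheory.volume 0 1 := by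
    apply ContinuousOn.intervalIntegrable
    rw [Set.uIcc_of_le (by norm_num : (0:ℝ) ≤ 1)]
    exact (hcontf.norm.pow 4).congr (fun x _ => rfl)
  have hstepB : (∫ x in (0:ℝ)..1, ‖f x‖ ^ 4) ≤ C * A := by
    have : (∫ x in (0:ℝ)..1, ‖f x‖ ^ 4) ≤
        ∫ x in (0:ℝ)..1, C * ‖f x‖ ^ 2 := by
      apply integral_mono_on (by norm_num) hintf4 (hintf2.const_mul C)
      intro t ht
      have h := key t ht
      have habs : (0:ℝ) ≤ ‖f t‖ ^ 2 := by positivity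
      calc ‖f t‖ ^ 4 = ‖f t‖ ^ 2 * ‖f t‖ ^ 2 := by ring
        _ ≤ C * ‖f t‖ ^ 2 := mul_le_mul_of_nonneg_right h habs
    rwa [intervalIntegral.integral_const_mul] at this
  -- step C : Cauchy-Schwarz
  have hA0 : 0 ≤ A := by
    rw [hA]
    apply intervalIntegral.integral_nonneg (by norm_num)
    intro t _; positivity
  have hB0 : 0 ≤ B := by
    rw [hB]
    apply intervalIntegral.integral_nonneg (by norm_num)
    intro t _; positivity
  have hCS : C ≤ 2 * (A ^ ((1:ℝ)/2) * B ^ ((1:ℝ)/2)) := by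
    have h01 : (0:ℝ) ≤ 1 := by norm_num
    have hmeasf : MeasureTheory.AEStronglyMeasurable (fun t => ‖f t‖)
        (MeasureTheory.volume.restrict (Set.Ioc (0:ℝ) 1)) :=
      ((hcontf.mono Set.Ioc_subset_Icc_self).norm).aestronglyMeasurable measurableSet_Ioc
    have hmeasf' : MeasureTheory.AEStronglyMeasurable (fun t => ‖f' t‖)
        (MeasureTheory.volume.restrict (Set.Ioc (0:ℝ) 1)) :=
      ((hcont.mono Set.Ioc_subset_Icc_self).norm).aestronglyMeasurable measurableSet_Ioc
    obtain ⟨M, hM⟩ := (isCompact_Icc.exists_bound_of_continuousOn hcontf)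
    obtain ⟨M', hM'⟩ := (isCompact_Icc.exists_bound_of_continuousOn hcont)
    have hmemf : MeasureTheory.MemLp (fun t => ‖f t‖) (ENNReal.ofReal 2)
        (MeasureTheory.volume.restrict (Set.Ioc (0:ℝ) 1)) := by
      apply MeasureTheory.MemLp.of_bound hmeasf M
      rw [MeasureTheory.ae_restrict_iff' measurableSet_Ioc]
      filter_upwards with t ht
      rw [Real.norm_of_nonneg (norm_nonneg _)]
      exact hM t (Set.Ioc_subset_Icc_self ht)
    have hmemf' : MeasureTheory.MemLp (fun t => ‖f' t‖) (ENNReal.ofReal 2)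
        (MeasureTheory.volume.restrict (Set.Ioc (0:ℝ) 1)) := by
      apply MeasureTheory.MemLp.of_bound hmeasf' M'
      rw [MeasureTheory.ae_restrict_iff' measurableSet_Ioc]
      filter_upwards with t ht
      rw [Real.norm_of_nonneg (norm_nonneg _)]
      exact hM' t (Set.Ioc_subset_Icc_self ht)
    have hpq : Real.HolderConjugate 2 2 := by constructor <;> norm_num
    have hCS0 := MeasureTheory.integral_mul_le_Lp_mul_Lq_of_nonneg
      (μ := MeasureTheory.volume.restrict (Set.Ioc (0:ℝ) 1)) hpq
      (Filter.Eventually.of_forall fun t => norm_nonneg (f t))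
      (Filter.Eventually.of_forall fun t => norm_nonneg (f' t)) hmemf hmemf'
    have e1 : (∫ t in Set.Ioc (0:ℝ) 1, ‖f t‖ ^ (2:ℝ)) = A := by
      rw [hA, intervalIntegral.integral_of_le h01]
      apply MeasureTheory.integral_congr_ae
      filter_upwards with t
      rw [← Real.rpow_natCast ‖f t‖ 2]
      norm_num
    have e2 : (∫ t in Set.Ioc (0:ℝ) 1, ‖f' t‖ ^ (2:ℝ)) = B := by
      rw [hB, intervalIntegral.integral_of_le h01]
      apply MeasureTheory.integral_congr_ae
      filter_upwards with t
      rw [← Real.rpow_natCast ‖f' t‖ 2]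
      norm_num
    have e3 : C = 2 * ∫ t in Set.Ioc (0:ℝ) 1, ‖f t‖ * ‖f' t‖ := by
      rw [hC, intervalIntegral.integral_of_le h01, MeasureTheory.integral_const_mul]
    rw [e3]
    rw [e1, e2] at hCS0
    have : ((1:ℝ)/2) = 1/(2:ℝ) := by norm_num
    apply mul_le_mul_of_nonneg_left _ (by norm_num : (0:ℝ) ≤ 2)
    exact hCS0
  -- conclude
  have hA12 : (0:ℝ) ≤ A ^ ((1:ℝ)/2) := Real.rpow_nonneg hA0 _
  have hB12 : (0:ℝ) ≤ B ^ ((1:ℝ)/2) := Real.rpow_nonneg hB0 _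
  have hAsq : (A ^ ((1:ℝ)/2)) ^ 2 = A := by
    rw [← Real.rpow_natCast (A ^ ((1:ℝ)/2)) 2, ← Real.rpow_mul hA0]
    norm_num
  have hA32 : A ^ ((3:ℝ)/2) = (A ^ ((1:ℝ)/2)) ^ 3 := by
    rw [← Real.rpow_natCast (A ^ ((1:ℝ)/2)) 3, ← Real.rpow_mul hA0]
    norm_num
  calc (∫ x in (0:ℝ)..1, ‖f x‖ ^ 4) ≤ C * A := hstepB
    _ ≤ (2 * (A ^ ((1:ℝ)/2) * B ^ ((1:ℝ)/2))) * A := by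
        apply mul_le_mul_of_nonneg_right hCS hA0
    _ = 2 * A ^ ((3:ℝ)/2) * B ^ ((1:ℝ)/2) := by
        rw [show (3:ℝ)/2 = 1/2 + 1 by norm_num,
          Real.rpow_add_of_nonneg hA0 (by norm_num) (by norm_num), Real.rpow_one]
        ring
end

section
/- Let λ ∈ {−1, 1}, let u, v : ℝ → ℂ be twice continuously differentiable on [0,1] with u(0) = u(1) = v(0) = v(1) = 0, let F : [0,1] → ℝ be continuous with F(x) ≥ 0 for all x ∈ [0,1], and set w := u − v. Then the one-sided (quasi-monotonicity) estimate for the cubic Schrödinger nonlinearity holds: ∫₀¹ Re[ conj(w(x)) · ( i w''(x) + i λ (|u(x)|² u(x) − |v(x)|² v(x)) − (1/2) F(x) w(x) ) ] dx ≤ ‖u‖_{L∞} ‖v‖_{L∞} ∫₀¹ |w(x)|² dx. -/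
open intervalIntegral

lemma key_real (A B c s t : ℝ) (ht : 0 ≤ t) (ht2 : t^2 = A*B) (hcs : s^2 + c^2 = A*B)
    (hAB : 0 ≤ A + B - 2*c) :
    |(A - B) * s| ≤ t * (A + B - 2*c) := by
  have hX : 0 ≤ t * (A + B - 2*c) := mul_nonneg ht hAB
  have hsq : ((A - B) * s)^2 ≤ (t * (A + B - 2*c))^2 := by
    have hid : (t * (A + B - 2*c))^2 - ((A-B)*s)^2 = (2*A*B - (A+B)*c)^2 := by
      linear_combination (A+B-2*c)^2 * ht2 - (A-B)^2 * hcs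
    nlinarith [sq_nonneg (2*A*B - (A+B)*c)]
  exact abs_le_of_sq_le_sq hsq hX

lemma key_complex (a b : ℂ) :
    |(Complex.I * (starRingEnd ℂ) (a - b)
        * (((‖a‖ : ℝ) : ℂ)^2 * a - ((‖b‖ : ℝ) : ℂ)^2 * b)).re|
      ≤ ‖a‖ * ‖b‖ * ‖a - b‖^2 := by
  set p := a.re; set q := a.im; set r := b.re; set s := b.im
  have hre : (Complex.I * (starRingEnd ℂ) (a - b)
        * (((‖a‖ : ℝ) : ℂ)^2 * a - ((‖b‖ : ℝ) : ℂ)^2 * b)).re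
      = -(((p^2+q^2) - (r^2+s^2)) * (p*s - q*r)) := by
    have h1 : (((‖a‖ : ℝ) : ℂ))^2 = (((p^2+q^2 : ℝ)) : ℂ) := by
      rw [← Complex.ofReal_pow, Complex.sq_norm, Complex.normSq_apply]; norm_num; ring_nf; rfl
    have h2 : (((‖b‖ : ℝ) : ℂ))^2 = (((r^2+s^2 : ℝ)) : ℂ) := by
      rw [← Complex.ofReal_pow, Complex.sq_norm, Complex.normSq_apply]; norm_num; ring_nf; rfl
    rw [h1, h2]
    simp [Complex.mul_re, Complex.mul_im, Complex.sub_re, Complex.sub_im, pow_two, Complex.ofReal_re, Complex.ofReal_im]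
    ring
  have habs : ‖a - b‖^2 = (p^2+q^2) + (r^2+s^2) - 2*(p*r + q*s) := by
    rw [Complex.sq_norm, Complex.normSq_apply]; simp [Complex.sub_re, Complex.sub_im]; ring
  rw [hre, abs_neg, habs]
  exact key_real (p^2+q^2) (r^2+s^2) (p*r+q*s) (p*s-q*r) (‖a‖ * ‖b‖)
    (by positivity)
    (by rw [mul_pow, Complex.sq_norm, Complex.sq_norm, Complex.normSq_apply, Complex.normSq_apply]; ring)
    (by ring)
    (by nlinarith [sq_nonneg (p-r), sq_nonneg (q-s)])

lemma expand_re (lamc : ℝ) (W W2 N : ℂ) (Fx : ℝ) :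
    ((starRingEnd ℂ) W * (Complex.I * W2 + Complex.I * (lamc:ℂ) * N - (1/2:ℂ) * (Fx:ℂ) * W)).re
      = (Complex.I * (starRingEnd ℂ) W * W2).re
        + lamc * (Complex.I * (starRingEnd ℂ) W * N).re
        - (1/2) * Fx * ‖W‖ ^ 2 := by
  rw [Complex.sq_norm, Complex.normSq_apply]
  simp [Complex.mul_re, Complex.mul_im, Complex.add_re, Complex.add_im, Complex.sub_re,
    Complex.sub_im, Complex.ofReal_re, Complex.ofReal_im]
  ring

/-- One-sided (quasi-monotonicity) estimate for the cubic Schrödinger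
nonlinearity: for `u, v` twice continuously differentiable on `[0,1]` with
homogeneous Dirichlet boundary conditions, a continuous nonnegative
`F : [0,1] → ℝ`, and `w = u − v`,
`∫₀¹ Re[conj(w) (i w'' + i λ (|u|²u − |v|²v) − (1/2) F w)] ≤ ‖u‖_∞ ‖v‖_∞ ∫₀¹ |w|²`. -/
theorem one_sided_cubic_estimate (lam : ℝ) (hlam : lam = 1 ∨ lam = -1)
    (u u' u'' v v' v'' : ℝ → ℂ)
    (hu1 : ∀ x ∈ Set.Icc (0 : ℝ) 1, HasDerivWithinAt u (u' x) (Set.Icc 0 1) x)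
    (hu2 : ∀ x ∈ Set.Icc (0 : ℝ) 1, HasDerivWithinAt u' (u'' x) (Set.Icc 0 1) x)
    (hu2c : ContinuousOn u'' (Set.Icc 0 1))
    (hv1 : ∀ x ∈ Set.Icc (0 : ℝ) 1, HasDerivWithinAt v (v' x) (Set.Icc 0 1) x)
    (hv2 : ∀ x ∈ Set.Icc (0 : ℝ) 1, HasDerivWithinAt v' (v'' x) (Set.Icc 0 1) x)
    (hv2c : ContinuousOn v'' (Set.Icc 0 1))
    (hu0 : u 0 = 0) (hu1b : u 1 = 0) (hv0 : v 0 = 0) (hv1b : v 1 = 0)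
    (F : ℝ → ℝ) (hFc : ContinuousOn F (Set.Icc 0 1))
    (hFpos : ∀ x ∈ Set.Icc (0 : ℝ) 1, 0 ≤ F x) :
    (∫ x in (0 : ℝ)..1,
        ((starRingEnd ℂ) (u x - v x)
          * (Complex.I * (u'' x - v'' x)
            + Complex.I * (lam : ℂ)
              * (((‖u x‖ : ℝ) : ℂ) ^ 2 * u x - ((‖v x‖ : ℝ) : ℂ) ^ 2 * v x)
            - (1 / 2 : ℂ) * (F x : ℂ) * (u x - v x))).re)
      ≤ (⨆ x : Set.Icc (0 : ℝ) 1, ‖u x‖)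
        * (⨆ x : Set.Icc (0 : ℝ) 1, ‖v x‖)
        * ∫ x in (0 : ℝ)..1, ‖u x - v x‖ ^ 2 := by
  have h01 : (0:ℝ) ≤ 1 := zero_le_one
  have huIcc : Set.uIcc (0:ℝ) 1 = Set.Icc 0 1 := Set.uIcc_of_le h01
  have hmem0 : (0:ℝ) ∈ Set.Icc (0:ℝ) 1 := ⟨le_refl _, h01⟩
  have hmem1 : (1:ℝ) ∈ Set.Icc (0:ℝ) 1 := ⟨h01, le_refl _⟩
  -- continuity
  have hucont : ContinuousOn u (Set.Icc 0 1) := fun x hx => (hu1 x hx).continuousWithinAt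
  have hvcont : ContinuousOn v (Set.Icc 0 1) := fun x hx => (hv1 x hx).continuousWithinAt
  have hu'cont : ContinuousOn u' (Set.Icc 0 1) := fun x hx => (hu2 x hx).continuousWithinAt
  have hv'cont : ContinuousOn v' (Set.Icc 0 1) := fun x hx => (hv2 x hx).continuousWithinAt
  set M₁ := ⨆ x : Set.Icc (0 : ℝ) 1, ‖u x‖ with hM₁def
  set M₂ := ⨆ x : Set.Icc (0 : ℝ) 1, ‖v x‖ with hM₂def
  have hbdd1 : BddAbove (Set.range fun x : Set.Icc (0:ℝ) 1 => ‖u x‖) := by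
    rw [show (fun x : Set.Icc (0:ℝ) 1 => ‖u x‖)
        = (Set.Icc (0:ℝ) 1).domRestrict (fun y => ‖u y‖) from rfl,
      Set.range_domRestrict]
    exact (isCompact_Icc.image_of_continuousOn
      (continuous_norm.comp_continuousOn hucont)).bddAbove
  have hbdd2 : BddAbove (Set.range fun x : Set.Icc (0:ℝ) 1 => ‖v x‖) := by
    rw [show (fun x : Set.Icc (0:ℝ) 1 => ‖v x‖)
        = (Set.Icc (0:ℝ) 1).domRestrict (fun y => ‖v y‖) from rfl,
      Set.range_domRestrict]
    exact (isCompact_Icc.image_of_continuousOn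
      (continuous_norm.comp_continuousOn hvcont)).bddAbove
  have hM1 : ∀ x ∈ Set.Icc (0:ℝ) 1, ‖u x‖ ≤ M₁ :=
    fun x hx => le_ciSup hbdd1 ⟨x, hx⟩
  have hM2 : ∀ x ∈ Set.Icc (0:ℝ) 1, ‖v x‖ ≤ M₂ :=
    fun x hx => le_ciSup hbdd2 ⟨x, hx⟩
  have hM1n : 0 ≤ M₁ := le_trans (norm_nonneg _) (hM1 0 hmem0)
  have hM2n : 0 ≤ M₂ := le_trans (norm_nonneg _) (hM2 0 hmem0)
  -- the boundary function G and its derivative G'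
  set G : ℝ → ℝ := fun x => (Complex.I * (starRingEnd ℂ) (u x - v x) * (u' x - v' x)).re with hGdef
  set G' : ℝ → ℝ := fun x => (Complex.I * (starRingEnd ℂ) (u x - v x) * (u'' x - v'' x)).re with hG'def
  have hGderiv : ∀ x ∈ Set.Icc (0:ℝ) 1, HasDerivWithinAt G (G' x) (Set.Icc 0 1) x := by
    intro x hx
    have hw1 : HasDerivWithinAt (fun y => u y - v y) (u' x - v' x) (Set.Icc 0 1) x :=
      (hu1 x hx).sub (hv1 x hx)
    have hw2 : HasDerivWithinAt (fun y => u' y - v' y) (u'' x - v'' x) (Set.Icc 0 1) x :=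
      (hu2 x hx).sub (hv2 x hx)
    have hc : HasDerivWithinAt (fun y => (starRingEnd ℂ) (u y - v y))
        ((starRingEnd ℂ) (u' x - v' x)) (Set.Icc 0 1) x := by
      simpa using hw1.star
    have hmul : HasDerivWithinAt
        (fun y => (Complex.I * (starRingEnd ℂ) (u y - v y)) * (u' y - v' y))
        ((Complex.I * (starRingEnd ℂ) (u' x - v' x)) * (u' x - v' x)
          + (Complex.I * (starRingEnd ℂ) (u x - v x)) * (u'' x - v'' x))
        (Set.Icc 0 1) x := (hc.const_mul Complex.I).mul hw2
    have hre := Complex.reCLM.hasFDerivAt.comp_hasDerivWithinAt x hmul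
    have hzero : (Complex.reCLM : ℂ →L[ℝ] ℝ)
        ((Complex.I * (starRingEnd ℂ) (u' x - v' x)) * (u' x - v' x)
          + (Complex.I * (starRingEnd ℂ) (u x - v x)) * (u'' x - v'' x)) = G' x := by
      simp [hG'def, Complex.mul_re, Complex.mul_im, Complex.add_re]
      ring
    rw [hzero] at hre
    exact hre
  have hGcont : ContinuousOn G (Set.Icc 0 1) :=
    fun x hx => (hGderiv x hx).continuousWithinAt
  have hG'cont : ContinuousOn G' (Set.Icc 0 1) := by
    apply Complex.continuous_re.comp_continuousOn
    exact (continuousOn_const.mul ((hucont.sub hvcont).star)).mul (hu2c.sub hv2c)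
  have hG'int : IntervalIntegrable G' MeasureTheory.volume 0 1 := by
    apply ContinuousOn.intervalIntegrable; rwa [huIcc]
  have hintG' : ∫ x in (0:ℝ)..1, G' x = G 1 - G 0 := by
    apply integral_eq_sub_of_hasDeriv_right_of_le h01 hGcont _ hG'int
    intro x hx
    exact (((hGderiv x (Set.Ioo_subset_Icc_self hx)).hasDerivAt
      (Icc_mem_nhds hx.1 hx.2)).hasDerivWithinAt)
  have hG1 : G 1 = 0 := by simp [hGdef, hu1b, hv1b]
  have hG0 : G 0 = 0 := by simp [hGdef, hu0, hv0]
  -- integrand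
  set f : ℝ → ℝ := fun x =>
      ((starRingEnd ℂ) (u x - v x)
        * (Complex.I * (u'' x - v'' x)
          + Complex.I * (lam : ℂ)
            * (((‖u x‖ : ℝ) : ℂ) ^ 2 * u x - ((‖v x‖ : ℝ) : ℂ) ^ 2 * v x)
          - (1 / 2 : ℂ) * (F x : ℂ) * (u x - v x))).re with hfdef
  set g : ℝ → ℝ := fun x => G' x + (M₁ * M₂) * ‖u x - v x‖ ^ 2 with hgdef
  -- pointwise bound
  have hpt : ∀ x ∈ Set.Icc (0:ℝ) 1, f x ≤ g x := by
    intro x hx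
    have hexp := expand_re lam (u x - v x) (u'' x - v'' x)
      (((‖u x‖ : ℝ) : ℂ) ^ 2 * u x - ((‖v x‖ : ℝ) : ℂ) ^ 2 * v x) (F x)
    have hNle : lam * (Complex.I * (starRingEnd ℂ) (u x - v x)
        * (((‖u x‖ : ℝ) : ℂ) ^ 2 * u x - ((‖v x‖ : ℝ) : ℂ) ^ 2 * v x)).re
        ≤ (M₁ * M₂) * ‖u x - v x‖ ^ 2 := by
      have h1 : lam * (Complex.I * (starRingEnd ℂ) (u x - v x)
          * (((‖u x‖ : ℝ) : ℂ) ^ 2 * u x - ((‖v x‖ : ℝ) : ℂ) ^ 2 * v x)).re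
          ≤ |(Complex.I * (starRingEnd ℂ) (u x - v x)
          * (((‖u x‖ : ℝ) : ℂ) ^ 2 * u x - ((‖v x‖ : ℝ) : ℂ) ^ 2 * v x)).re| := by
        rcases hlam with h | h <;> rw [h]
        · rw [one_mul]; exact le_abs_self _
        · rw [neg_one_mul]; exact neg_le_abs _
      refine h1.trans ((key_complex (u x) (v x)).trans ?_)
      have hsq : (0:ℝ) ≤ ‖u x - v x‖ ^ 2 := sq_nonneg _
      have : ‖u x‖ * ‖v x‖ ≤ M₁ * M₂ :=
        mul_le_mul (hM1 x hx) (hM2 x hx) (norm_nonneg _) hM1n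
      exact mul_le_mul_of_nonneg_right this hsq
    have hF : 0 ≤ (1/2) * F x * ‖u x - v x‖ ^ 2 := by
      have := hFpos x hx
      positivity
    rw [hfdef]
    simp only []
    rw [hexp, hgdef]
    simp only []
    linarith [hNle, hF]
  -- integrability of f and g
  have hfcont : ContinuousOn f (Set.Icc 0 1) := by
    apply Complex.continuous_re.comp_continuousOn
    apply ContinuousOn.mul ((hucont.sub hvcont).star)
    apply ContinuousOn.sub
    apply ContinuousOn.add
    · exact continuousOn_const.mul (hu2c.sub hv2c)
    · apply ContinuousOn.mul continuousOn_const
      apply ContinuousOn.sub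
      · exact ((Complex.continuous_ofReal.comp_continuousOn
          (continuous_norm.comp_continuousOn hucont)).pow 2).mul hucont
      · exact ((Complex.continuous_ofReal.comp_continuousOn
          (continuous_norm.comp_continuousOn hvcont)).pow 2).mul hvcont
    · exact (continuousOn_const.mul (Complex.continuous_ofReal.comp_continuousOn hFc)).mul
        (hucont.sub hvcont)
  have hwsqcont : ContinuousOn (fun x => ‖u x - v x‖ ^ 2) (Set.Icc 0 1) :=
    (continuous_norm.comp_continuousOn (hucont.sub hvcont)).pow 2
  have hfint : IntervalIntegrable f MeasureTheory.volume 0 1 := by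
    apply ContinuousOn.intervalIntegrable; rwa [huIcc]
  have hwsqint : IntervalIntegrable (fun x => ‖u x - v x‖ ^ 2)
      MeasureTheory.volume 0 1 := by
    apply ContinuousOn.intervalIntegrable; rwa [huIcc]
  have hgint : IntervalIntegrable g MeasureTheory.volume 0 1 :=
    hG'int.add (hwsqint.const_mul _)
  calc (∫ x in (0:ℝ)..1, f x) ≤ ∫ x in (0:ℝ)..1, g x := by
        apply integral_mono_on h01 hfint hgint
        intro x hx; exact hpt x hx
    _ = (∫ x in (0:ℝ)..1, G' x)
        + ∫ x in (0:ℝ)..1, (M₁ * M₂) * ‖u x - v x‖ ^ 2 :=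
        integral_add hG'int (hwsqint.const_mul _)
    _ = M₁ * M₂ * ∫ x in (0:ℝ)..1, ‖u x - v x‖ ^ 2 := by
        rw [hintG', hG1, hG0, integral_const_mul]; ring
end

section
/- Let N ∈ ℕ, h = 1/(N+1), λ ∈ {−1, 1}, let u, v : {0,1,…,N+1} → ℂ be grid functions with u(0) = u(N+1) = v(0) = v(N+1) = 0, let F : {0,1,…,N+1} → ℝ satisfy F(l) ≥ 0 for all l, and set ε := u − v. Then the discrete one-sided estimate for the cubic Schrödinger nonlinearity holds: ∑_{l=1}^{N} Re[ conj(ε(l)) · ( i δ₊δ₋ε(l) + i λ (|u(l)|² u(l) − |v(l)|² v(l)) − (1/2) F(l) ε(l) ) ] h ≤ ‖u‖_{l∞_h} ‖v‖_{l∞_h} ‖ε‖_h². -/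
private lemma key_real_s10 (A B c p q : ℝ) (hA : 0 ≤ A) (hB : 0 ≤ B) (hc : 0 ≤ c)
    (hc2 : c ^ 2 = A * B)
    (hpq : p ^ 2 + q ^ 2 = A * B) : (A - B) * p ≤ c * (A + B - 2 * q) := by
  have hkey : (c * (A + B)) ^ 2 - ((A - B) * p + 2 * c * q) ^ 2
      = ((A - B) * q - 2 * c * p) ^ 2 := by
    linear_combination ((A + B) ^ 2 - 4 * A * B) * hc2 - ((A - B) ^ 2 + 4 * c ^ 2) * hpq
  have hC : 0 ≤ c * (A + B) := mul_nonneg hc (by linarith)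
  have hX : ((A - B) * p + 2 * c * q) ^ 2 ≤ (c * (A + B)) ^ 2 := by
    nlinarith [sq_nonneg ((A - B) * q - 2 * c * p)]
  nlinarith [hX, hC]

private lemma shift_lemma (N : ℕ) (ε : ℕ → ℂ) (h0 : ε 0 = 0) (hN : ε (N + 1) = 0) :
    ∑ l ∈ Finset.Icc 1 N, ((starRingEnd ℂ) (ε l) * ε (l - 1)).im
      = - ∑ l ∈ Finset.Icc 1 N, ((starRingEnd ℂ) (ε l) * ε (l + 1)).im := by
  set f : ℕ → ℝ := fun i => ((starRingEnd ℂ) (ε i) * ε (i + 1)).im with hf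
  rw [← Finset.Ico_add_one_right_eq_Icc, Finset.sum_Ico_eq_sum_range, Finset.sum_Ico_eq_sum_range]
  simp only [Nat.add_sub_cancel]
  have e1 : ∀ i ∈ Finset.range N,
      ((starRingEnd ℂ) (ε (1 + i)) * ε (1 + i - 1)).im = -(f i) := by
    intro i _
    have h1 : 1 + i - 1 = i := by omega
    have h2 : 1 + i = i + 1 := by omega
    rw [h1, h2, hf]
    simp [Complex.mul_im, Complex.conj_re, Complex.conj_im]
    ring
  have e2 : ∀ i ∈ Finset.range N,
      ((starRingEnd ℂ) (ε (1 + i)) * ε (1 + i + 1)).im = f (i + 1) := by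
    intro i _
    have h2 : 1 + i = i + 1 := by omega
    rw [h2, hf]
  rw [Finset.sum_congr rfl e1, Finset.sum_congr rfl e2]
  have hsum : ∑ i ∈ Finset.range N, f i = ∑ i ∈ Finset.range N, f (i + 1) := by
    have ha := Finset.sum_range_succ f N
    have hb := Finset.sum_range_succ' f N
    have hf0 : f 0 = 0 := by simp [hf, h0]
    have hfN : f N = 0 := by simp [hf, hN]
    rw [ha] at hb
    linarith
  rw [Finset.sum_neg_distrib, hsum]

private lemma split_lemma (h : ℝ) (hh : h ≠ 0) (lam Fl : ℝ) (z zp zm U V : ℂ)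
    (hz : z = U - V) :
    ((starRingEnd ℂ) z * (Complex.I * ((zp - 2 * z + zm) / (h : ℝ) ^ 2)
      + Complex.I * (lam : ℂ)
        * (((‖U‖ : ℝ) : ℂ) ^ 2 * U - ((‖V‖ : ℝ) : ℂ) ^ 2 * V)
      - (1 / 2 : ℂ) * (Fl : ℂ) * z)).re * h
    = -((((starRingEnd ℂ) z * zp).im + ((starRingEnd ℂ) z * zm).im) / h)
      + ((-lam * ((Complex.normSq U - Complex.normSq V) * ((starRingEnd ℂ) U * V).im)) * h
        + (-(1 / 2 * Fl * Complex.normSq z) * h)) := by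
  subst hz
  have hU : (((‖U‖ : ℝ) : ℂ)) ^ 2 = ((Complex.normSq U : ℝ) : ℂ) := by
    rw [← Complex.ofReal_pow, Complex.sq_norm]
  have hV : (((‖V‖ : ℝ) : ℂ)) ^ 2 = ((Complex.normSq V : ℝ) : ℂ) := by
    rw [← Complex.ofReal_pow, Complex.sq_norm]
  have h2 : ((h : ℂ)) ^ 2 = ((h ^ 2 : ℝ) : ℂ) := by push_cast; ring
  rw [hU, hV, h2]
  simp only [Complex.div_ofReal_re, Complex.div_ofReal_im, Complex.mul_re, Complex.mul_im,
    Complex.add_re, Complex.add_im, Complex.sub_re, Complex.sub_im, Complex.I_re, Complex.I_im,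
    Complex.ofReal_re, Complex.ofReal_im, Complex.conj_re, Complex.conj_im,
    Complex.normSq_apply, Complex.re_ofNat, Complex.im_ofNat,
    Complex.one_re, Complex.one_im, Complex.div_re, Complex.div_im]
  field_simp
  ring

/-- Discrete one-sided estimate for the cubic Schrödinger nonlinearity for
grid functions `u, v` with homogeneous Dirichlet boundary conditions, a
nonnegative grid function `F`, and `ε = u − v`:
`∑_{l=1}^{N} Re[conj(ε(l)) (i δ₊δ₋ε(l) + i λ (|u(l)|²u(l) − |v(l)|²v(l)) − (1/2)F(l)ε(l))] h
  ≤ ‖u‖_{l∞_h} ‖v‖_{l∞_h} ‖ε‖_h²`. -/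
theorem discrete_one_sided_cubic_estimate (N : ℕ) (h : ℝ) (hh : h = 1 / (N + 1))
    (lam : ℝ) (hlam : lam = 1 ∨ lam = -1)
    (u v : ℕ → ℂ) (hu0 : u 0 = 0) (huN : u (N + 1) = 0)
    (hv0 : v 0 = 0) (hvN : v (N + 1) = 0)
    (F : ℕ → ℝ) (hF : ∀ l, 0 ≤ F l)
    (ε : ℕ → ℂ) (hε : ∀ l, ε l = u l - v l) :
    (∑ l ∈ Finset.Icc 1 N,
        ((starRingEnd ℂ) (ε l)
          * (Complex.I * ((ε (l + 1) - 2 * ε l + ε (l - 1)) / (h : ℂ) ^ 2)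
            + Complex.I * (lam : ℂ)
              * (((‖u l‖ : ℝ) : ℂ) ^ 2 * u l - ((‖v l‖ : ℝ) : ℂ) ^ 2 * v l)
            - (1 / 2 : ℂ) * (F l : ℂ) * ε l)).re * h)
      ≤ ((Finset.range (N + 2)).sup' (by simp) fun l => ‖u l‖)
        * ((Finset.range (N + 2)).sup' (by simp) fun l => ‖v l‖)
        * (∑ l ∈ Finset.range (N + 2), ‖ε l‖ ^ 2 * h) := by
  have hhpos : 0 < h := by rw [hh]; positivity
  have hhne : h ≠ 0 := ne_of_gt hhpos
  have hε0 : ε 0 = 0 := by rw [hε, hu0, hv0, sub_zero]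
  have hεN : ε (N + 1) = 0 := by rw [hε, huN, hvN, sub_zero]
  set MU : ℝ := (Finset.range (N + 2)).sup' (by simp) fun l => ‖u l‖ with hMU
  set MV : ℝ := (Finset.range (N + 2)).sup' (by simp) fun l => ‖v l‖ with hMV
  have hMUl : ∀ l ∈ Finset.range (N + 2), ‖u l‖ ≤ MU := by
    intro l hl
    rw [hMU]
    exact Finset.le_sup' (fun l => ‖u l‖) hl
  have hMVl : ∀ l ∈ Finset.range (N + 2), ‖v l‖ ≤ MV := by
    intro l hl
    rw [hMV]
    exact Finset.le_sup' (fun l => ‖v l‖) hl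
  have hMU0 : 0 ≤ MU :=
    le_trans (norm_nonneg (u 0)) (hMUl 0 (by simp))
  have hMV0 : 0 ≤ MV :=
    le_trans (norm_nonneg (v 0)) (hMVl 0 (by simp))
  have hsubset : Finset.Icc 1 N ⊆ Finset.range (N + 2) := by
    intro x hx
    simp only [Finset.mem_Icc] at hx
    simp only [Finset.mem_range]
    omega
  calc (∑ l ∈ Finset.Icc 1 N,
        ((starRingEnd ℂ) (ε l)
          * (Complex.I * ((ε (l + 1) - 2 * ε l + ε (l - 1)) / (h : ℂ) ^ 2)
            + Complex.I * (lam : ℂ)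
              * (((‖u l‖ : ℝ) : ℂ) ^ 2 * u l - ((‖v l‖ : ℝ) : ℂ) ^ 2 * v l)
            - (1 / 2 : ℂ) * (F l : ℂ) * ε l)).re * h)
      = ∑ l ∈ Finset.Icc 1 N,
          (-((((starRingEnd ℂ) (ε l) * ε (l + 1)).im
              + ((starRingEnd ℂ) (ε l) * ε (l - 1)).im) / h)
            + ((-lam * ((Complex.normSq (u l) - Complex.normSq (v l))
                * ((starRingEnd ℂ) (u l) * v l).im)) * h
              + (-(1 / 2 * F l * Complex.normSq (ε l)) * h))) := by
        refine Finset.sum_congr rfl fun l _ => ?_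
        exact split_lemma h hhne lam (F l) (ε l) (ε (l + 1)) (ε (l - 1)) (u l) (v l) (hε l)
    _ = (∑ l ∈ Finset.Icc 1 N,
          -((((starRingEnd ℂ) (ε l) * ε (l + 1)).im
              + ((starRingEnd ℂ) (ε l) * ε (l - 1)).im) / h))
        + ∑ l ∈ Finset.Icc 1 N,
            ((-lam * ((Complex.normSq (u l) - Complex.normSq (v l))
                * ((starRingEnd ℂ) (u l) * v l).im)) * h
              + (-(1 / 2 * F l * Complex.normSq (ε l)) * h)) := Finset.sum_add_distrib
    _ = ∑ l ∈ Finset.Icc 1 N,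
            ((-lam * ((Complex.normSq (u l) - Complex.normSq (v l))
                * ((starRingEnd ℂ) (u l) * v l).im)) * h
              + (-(1 / 2 * F l * Complex.normSq (ε l)) * h)) := by
        have hz : (∑ l ∈ Finset.Icc 1 N,
            -((((starRingEnd ℂ) (ε l) * ε (l + 1)).im
              + ((starRingEnd ℂ) (ε l) * ε (l - 1)).im) / h)) = 0 := by
          have hs := shift_lemma N ε hε0 hεN
          have e : ∀ l ∈ Finset.Icc 1 N,
              -((((starRingEnd ℂ) (ε l) * ε (l + 1)).im
                + ((starRingEnd ℂ) (ε l) * ε (l - 1)).im) / h)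
              = (((starRingEnd ℂ) (ε l) * ε (l + 1)).im
                + ((starRingEnd ℂ) (ε l) * ε (l - 1)).im) * (-(1 / h)) := by
            intro l _; ring
          rw [Finset.sum_congr rfl e, ← Finset.sum_mul, Finset.sum_add_distrib, hs]
          ring
        rw [hz, zero_add]
    _ ≤ ∑ l ∈ Finset.Icc 1 N, MU * MV * (‖ε l‖ ^ 2 * h) := by
        refine Finset.sum_le_sum fun l hl => ?_
        have hl2 := hsubset hl
        have hua := hMUl l hl2
        have hva := hMVl l hl2
        set A := Complex.normSq (u l) with hA
        set B := Complex.normSq (v l) with hB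
        set p := ((starRingEnd ℂ) (u l) * v l).im with hp
        set q := ((starRingEnd ℂ) (u l) * v l).re with hq
        have hAn : 0 ≤ A := Complex.normSq_nonneg _
        have hBn : 0 ≤ B := Complex.normSq_nonneg _
        have hcn : 0 ≤ ‖u l‖ * ‖v l‖ :=
          mul_nonneg (norm_nonneg _) (norm_nonneg _)
        have hc2 : (‖u l‖ * ‖v l‖) ^ 2 = A * B := by
          rw [mul_pow, Complex.sq_norm, Complex.sq_norm]
        have hpq : p ^ 2 + q ^ 2 = A * B := by
          have h1 : Complex.normSq ((starRingEnd ℂ) (u l) * v l) = A * B := by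
            rw [map_mul, Complex.normSq_conj]
          rw [Complex.normSq_apply] at h1
          rw [hp, hq]
          nlinarith [h1]
        have hεsq : A + B - 2 * q = ‖ε l‖ ^ 2 := by
          rw [hε l, Complex.sq_norm, Complex.normSq_sub, hA, hB, hq]
          have : (u l * (starRingEnd ℂ) (v l)).re = ((starRingEnd ℂ) (u l) * v l).re := by
            simp [Complex.mul_re, Complex.conj_re, Complex.conj_im]
            try ring
          rw [this]
        have hkey : -lam * ((A - B) * p) ≤
            ‖u l‖ * ‖v l‖ * (‖ε l‖ ^ 2) := by
          rw [← hεsq]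
          rcases hlam with hl1 | hl1
          · have := key_real_s10 A B (‖u l‖ * ‖v l‖) (-p) q hAn hBn hcn
              hc2 (by rw [neg_pow]; simpa using hpq)
            rw [hl1]; nlinarith [this]
          · have := key_real_s10 A B (‖u l‖ * ‖v l‖) p q hAn hBn hcn
              hc2 hpq
            rw [hl1]; nlinarith [this]
        have hcb : ‖u l‖ * ‖v l‖ ≤ MU * MV :=
          mul_le_mul hua hva (norm_nonneg _) hMU0
        have hT3 : -(1 / 2 * F l * Complex.normSq (ε l)) * h ≤ 0 := by
          have h1 : 0 ≤ 1 / 2 * F l * Complex.normSq (ε l) :=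
            mul_nonneg (mul_nonneg (by norm_num) (hF l)) (Complex.normSq_nonneg _)
          nlinarith [h1, hhpos.le]
        have hT2 : (-lam * ((A - B) * p)) * h ≤ MU * MV * (‖ε l‖ ^ 2 * h) := by
          have h1 : ‖u l‖ * ‖v l‖ * (‖ε l‖ ^ 2)
              ≤ MU * MV * ‖ε l‖ ^ 2 :=
            mul_le_mul_of_nonneg_right hcb (sq_nonneg _)
          have h2 := le_trans hkey h1
          calc (-lam * ((A - B) * p)) * h ≤ (MU * MV * ‖ε l‖ ^ 2) * h :=
                mul_le_mul_of_nonneg_right h2 hhpos.le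
            _ = MU * MV * (‖ε l‖ ^ 2 * h) := by ring
        linarith [hT2, hT3]
    _ ≤ ∑ l ∈ Finset.range (N + 2), MU * MV * (‖ε l‖ ^ 2 * h) := by
        refine Finset.sum_le_sum_of_subset_of_nonneg hsubset fun l _ _ => ?_
        have : 0 ≤ ‖ε l‖ ^ 2 * h := mul_nonneg (sq_nonneg _) hhpos.le
        exact mul_nonneg (mul_nonneg hMU0 hMV0) this
    _ = MU * MV * ∑ l ∈ Finset.range (N + 2), ‖ε l‖ ^ 2 * h :=
        (Finset.mul_sum _ _ _).symm
end

section
/- Let f : ℝ → ℂ be continuously differentiable on [0,1]. Then the one-dimensional Sobolev embedding with explicit constant holds: sup_{x ∈ [0,1]} |f(x)|² ≤ 2 ( ∫₀¹ |f(x)|² dx + ∫₀¹ |f'(x)|² dx ), i.e. ‖f‖_{L∞} ≤ √2 (‖f‖_{L²}² + ‖f'‖_{L²}²)^{1/2}. -/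
open intervalIntegral Set MeasureTheory

/-- One-dimensional Sobolev embedding with explicit constant: if `f` is
continuously differentiable on `[0,1]` (with derivative `f'`), then
`sup_{x ∈ [0,1]} |f x|² ≤ 2 (∫₀¹ |f|² + ∫₀¹ |f'|²)`. -/

theorem sobolev_embedding_one_dim (f f' : ℝ → ℂ)
    (hderiv : ∀ x ∈ Set.Icc (0 : ℝ) 1, HasDerivWithinAt f (f' x) (Set.Icc 0 1) x)
    (hcont : ContinuousOn f' (Set.Icc 0 1)) :
    ∀ x ∈ Set.Icc (0 : ℝ) 1, ‖f x‖ ^ 2 ≤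
      2 * ((∫ x in (0 : ℝ)..1, ‖f x‖ ^ 2)
        + ∫ x in (0 : ℝ)..1, ‖f' x‖ ^ 2) := by
  intro x hx
  -- notation
  set g : ℝ → ℝ := fun t => ‖f t‖ ^ 2 with hg
  set g' : ℝ → ℝ := fun t => 2 * ((f t).re * (f' t).re + (f t).im * (f' t).im) with hg'
  set h : ℝ → ℝ := fun t => ‖f t‖ ^ 2 + ‖f' t‖ ^ 2 with hh
  have hfc : ContinuousOn f (Set.Icc 0 1) := fun t ht => (hderiv t ht).continuousWithinAt
  have hgderiv : ∀ t ∈ Set.Icc (0:ℝ) 1, HasDerivWithinAt g (g' t) (Set.Icc 0 1) t := by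
    intro t ht
    have hre : HasDerivWithinAt (fun s => (f s).re) ((f' t).re) (Set.Icc 0 1) t :=
      (Complex.reCLM.hasFDerivAt.comp_hasDerivWithinAt t (hderiv t ht))
    have him : HasDerivWithinAt (fun s => (f s).im) ((f' t).im) (Set.Icc 0 1) t :=
      (Complex.imCLM.hasFDerivAt.comp_hasDerivWithinAt t (hderiv t ht))
    have : HasDerivWithinAt (fun s => (f s).re * (f s).re + (f s).im * (f s).im)
        ((f' t).re * (f t).re + (f t).re * (f' t).re +
          ((f' t).im * (f t).im + (f t).im * (f' t).im)) (Set.Icc 0 1) t :=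
      (hre.mul hre).add (him.mul him)
    have heq : ∀ s, g s = (f s).re * (f s).re + (f s).im * (f s).im := by
      intro s
      rw [hg]
      simp [← Complex.normSq_apply, ← Complex.sq_norm, sq]
    convert this using 1 with s
    · exact funext heq
    · rw [hg']; ring
  have hgcont : ContinuousOn g (Set.Icc 0 1) :=
    (continuous_norm.comp_continuousOn hfc).pow 2
  have hg'cont : ContinuousOn g' (Set.Icc 0 1) := by
    apply ContinuousOn.mul continuousOn_const
    exact ((Complex.continuous_re.comp_continuousOn hfc).mul
        (Complex.continuous_re.comp_continuousOn hcont)).add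
      ((Complex.continuous_im.comp_continuousOn hfc).mul
        (Complex.continuous_im.comp_continuousOn hcont))
  have hhcont : ContinuousOn h (Set.Icc 0 1) :=
    ((continuous_norm.comp_continuousOn hfc).pow 2).add
      ((continuous_norm.comp_continuousOn hcont).pow 2)
  have hhnn : ∀ t, 0 ≤ h t := fun t => by positivity
  -- pointwise bound |g'| ≤ h
  have hptwise : ∀ t, |g' t| ≤ h t := by
    intro t
    have h1 : ‖f t‖ ^ 2 = (f t).re ^ 2 + (f t).im ^ 2 := by
      rw [Complex.sq_norm, Complex.normSq_apply]; ring
    have h2 : ‖f' t‖ ^ 2 = (f' t).re ^ 2 + (f' t).im ^ 2 := by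
      rw [Complex.sq_norm, Complex.normSq_apply]; ring
    show |2 * ((f t).re * (f' t).re + (f t).im * (f' t).im)| ≤
      ‖f t‖ ^ 2 + ‖f' t‖ ^ 2
    rw [h1, h2, abs_le]
    constructor <;> nlinarith [sq_nonneg ((f t).re + (f' t).re), sq_nonneg ((f t).im + (f' t).im),
      sq_nonneg ((f t).re - (f' t).re), sq_nonneg ((f t).im - (f' t).im)]
  set C : ℝ := ∫ t in (0:ℝ)..1, h t with hC
  have hhint : IntervalIntegrable h volume 0 1 :=
    hhcont.intervalIntegrable_of_Icc (by norm_num)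
  -- key: for a ≤ b in [0,1], |g b - g a| ≤ C
  have key : ∀ a ∈ Set.Icc (0:ℝ) 1, ∀ b ∈ Set.Icc (0:ℝ) 1, a ≤ b → |g b - g a| ≤ C := by
    intro a ha b hb hab
    have hsub : Set.Icc a b ⊆ Set.Icc (0:ℝ) 1 := Set.Icc_subset_Icc ha.1 hb.2
    have hftc : ∫ t in a..b, g' t = g b - g a := by
      apply integral_eq_sub_of_hasDeriv_right_of_le hab (hgcont.mono hsub)
      · intro t ht
        have ht' : t ∈ Set.Ioo (0:ℝ) 1 := ⟨lt_of_le_of_lt ha.1 ht.1, lt_of_lt_of_le ht.2 hb.2⟩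
        exact (((hgderiv t ⟨ht'.1.le, ht'.2.le⟩).hasDerivAt
          (Icc_mem_nhds ht'.1 ht'.2)).hasDerivWithinAt)
      · exact (hg'cont.mono hsub).intervalIntegrable_of_Icc hab
    rw [← hftc]
    calc |∫ t in a..b, g' t| ≤ ∫ t in a..b, |g' t| := abs_integral_le_integral_abs hab
      _ ≤ ∫ t in a..b, h t := by
          apply integral_mono_on hab
          · exact ((hg'cont.mono hsub).abs).intervalIntegrable_of_Icc hab
          · exact hhint.mono_set (by rw [Set.uIcc_of_le hab, Set.uIcc_of_le]; exact hsub; norm_num)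
          · exact fun t _ => hptwise t
      _ ≤ C := integral_mono_interval ha.1 hab hb.2
          (Filter.Eventually.of_forall fun t => hhnn t) hhint
  -- hence g x ≤ g y + C for all y in [0,1]
  have hbound : ∀ y ∈ Set.Icc (0:ℝ) 1, g x ≤ g y + C := by
    intro y hy
    rcases le_total y x with hyx | hxy
    · have := key y hy x hx hyx
      have := (abs_le.1 this).2
      linarith
    · have := key x hx y hy hxy
      have := (abs_le.1 this).1
      linarith
  -- integrate over y
  have hgint : IntervalIntegrable g volume 0 1 :=
    hgcont.intervalIntegrable_of_Icc (by norm_num)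
  have hint2 : (g x : ℝ) = ∫ y in (0:ℝ)..1, g x := by simp
  have hmain : g x ≤ (∫ y in (0:ℝ)..1, g y) + C := by
    calc g x = ∫ y in (0:ℝ)..1, g x := by simp
      _ ≤ ∫ y in (0:ℝ)..1, (g y + C) := by
          apply integral_mono_on (by norm_num) intervalIntegrable_const
            (hgint.add intervalIntegrable_const)
          exact fun y hy => hbound y hy
      _ = (∫ y in (0:ℝ)..1, g y) + C := by
          rw [integral_add hgint intervalIntegrable_const]; simp
  -- unfold C
  have hA : IntervalIntegrable (fun t => ‖f t‖ ^ 2) volume 0 1 := hgint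
  have hB : IntervalIntegrable (fun t => ‖f' t‖ ^ 2) volume 0 1 :=
    ((continuous_norm.comp_continuousOn hcont).pow 2).intervalIntegrable_of_Icc (by norm_num)
  have hCeq : C = (∫ t in (0:ℝ)..1, ‖f t‖ ^ 2)
      + ∫ t in (0:ℝ)..1, ‖f' t‖ ^ 2 := by
    rw [hC, hh, integral_add hA hB]
  have hBnn : 0 ≤ ∫ t in (0:ℝ)..1, ‖f' t‖ ^ 2 :=
    integral_nonneg (by norm_num) (fun t _ => by positivity)
  have : (∫ y in (0:ℝ)..1, g y) = ∫ t in (0:ℝ)..1, ‖f t‖ ^ 2 := rfl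
  rw [hg] at hmain
  simp only at hmain
  rw [this, hCeq] at hmain
  linarith
end
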